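/- arXiv:2109.13637 — 12 statements merged into one kernel-verified Lean document; each statement's English description precedes it below -/
import Mathlib

section
/- Let $E$ be a finite-dimensional vector space and $r$ an integer-valued function on subspaces of $E$ satisfying (R1) $0 \le r(A) \le \dim A$, (R2) $A \subseteq B \Rightarrow r(A) \le r(B)$, (R3) $r(A+B)+r(A\cap B) \le r(A)+r(B)$. Suppose $E = E_1 \oplus E_2$ and $r(E_1 + B) = r(E_1) + r(B)$ for all $B \subseteq E_2$ (and symmetrically). Then for all $A \subseteq E_1$ and $B \subseteq E_2$ with $A \cap B = 0$, it holds that $r(A+B) = r(A) + r(B)$. -/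
open Module Submodule

theorem direct_sum_rank_additive
    {K V : Type*} [Field K] [AddCommGroup V] [Module K V] [FiniteDimensional K V]
    (r : Submodule K V → ℤ)
    (hR1 : ∀ A : Submodule K V, 0 ≤ r A ∧ r A ≤ (finrank K A : ℤ))
    (hR2 : ∀ A B : Submodule K V, A ≤ B → r A ≤ r B)
    (hR3 : ∀ A B : Submodule K V, r (A ⊔ B) + r (A ⊓ B) ≤ r A + r B)
    (E1 E2 : Submodule K V) (hdisj : E1 ⊓ E2 = ⊥) (hsup : E1 ⊔ E2 = ⊤)
    (h1 : ∀ B ≤ E2, r (E1 ⊔ B) = r E1 + r B)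
    (h2 : ∀ A ≤ E1, r (E2 ⊔ A) = r E2 + r A) :
    ∀ A ≤ E1, ∀ B ≤ E2, A ⊓ B = ⊥ → r (A ⊔ B) = r A + r B := by
  intro A hA B hB hAB
  have hbot : r ⊥ = 0 := by
    have h := hR1 ⊥
    have : (finrank K (⊥ : Submodule K V) : ℤ) = 0 := by simp
    omega
  -- upper bound
  have hub : r (A ⊔ B) ≤ r A + r B := by
    have := hR3 A B
    rw [hAB, hbot] at this
    omega
  -- lower bound
  have key := hR3 (A ⊔ B) E1
  have hsupeq : (A ⊔ B) ⊔ E1 = E1 ⊔ B := by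
    rw [sup_comm]
    rw [← sup_assoc, sup_eq_left.mpr hA]
  have hA' : A ≤ (A ⊔ B) ⊓ E1 := le_inf le_sup_left hA
  have hmon := hR2 A ((A ⊔ B) ⊓ E1) hA'
  rw [hsupeq, h1 B hB] at key
  omega
end

section
/- Let $M=(E,r)$ be a $q$-matroid with $E = E_1 \oplus E_2$ such that $r(A+B) = r_1(A) + r_2(B)$ for all $A \subseteq E_1$, $B \subseteq E_2$, where $r_i$ is the restriction of $r$ to subspaces of $E_i$. If neither restriction $M|_{E_1}$ nor $M|_{E_2}$ has a loop (a $1$-dimensional subspace of rank $0$), then $M$ has no loops. -/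
open Module Submodule

theorem direct_sum_no_loops
    {K V : Type*} [Field K] [AddCommGroup V] [Module K V] [FiniteDimensional K V]
    (r : Submodule K V → ℤ)
    (hR1 : ∀ A : Submodule K V, 0 ≤ r A ∧ r A ≤ (finrank K A : ℤ))
    (hR2 : ∀ A B : Submodule K V, A ≤ B → r A ≤ r B)
    (hR3 : ∀ A B : Submodule K V, r (A ⊔ B) + r (A ⊓ B) ≤ r A + r B)
    (E1 E2 : Submodule K V) (hdisj : E1 ⊓ E2 = ⊥) (hsup : E1 ⊔ E2 = ⊤)
    (hsum : ∀ A ≤ E1, ∀ B ≤ E2, r (A ⊔ B) = r A + r B)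
    (hl1 : ∀ L ≤ E1, finrank K L = 1 → r L ≠ 0)
    (hl2 : ∀ L ≤ E2, finrank K L = 1 → r L ≠ 0) :
    ∀ L : Submodule K V, finrank K L = 1 → r L ≠ 0 := by
  intro L hL
  -- find a generator x of L
  have hpos : 0 < finrank K L := by omega
  obtain ⟨x, hxL, hx0⟩ : ∃ x ∈ L, x ≠ 0 := by
    by_contra h
    push_neg at h
    have : L = ⊥ := by
      ext y; simp only [Submodule.mem_bot]
      constructor
      · intro hy; exact h y hy
      · rintro rfl; exact L.zero_mem
    rw [this, finrank_bot] at hL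
    omega
  have hspan : Submodule.span K {x} = L := by
    apply Submodule.eq_of_le_of_finrank_le
    · exact Submodule.span_le.2 (by simpa using hxL)
    · rw [hL, finrank_span_singleton hx0]
  -- decompose x = x1 + x2
  have hxtop : x ∈ E1 ⊔ E2 := by rw [hsup]; exact Submodule.mem_top
  obtain ⟨x1, hx1, x2, hx2, hx12⟩ := Submodule.mem_sup.mp hxtop
  by_cases h2 : x2 = 0
  · -- L ≤ E1
    have : x ∈ E1 := by rw [← hx12, h2, add_zero]; exact hx1
    have hLE1 : L ≤ E1 := by
      rw [← hspan]; exact Submodule.span_le.2 (by simpa using this)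
    exact hl1 L hLE1 hL
  · -- x2 ≠ 0
    intro hrL
    have hs2 : (Submodule.span K {x2} : Submodule K V) ≤ E2 :=
      Submodule.span_le.2 (by simpa using hx2)
    have hf2 : finrank K (Submodule.span K {x2}) = 1 := finrank_span_singleton h2
    have hr2 : 1 ≤ r (Submodule.span K {x2}) := by
      have := (hR1 (Submodule.span K {x2})).1
      have := hl2 _ hs2 hf2
      omega
    have hs1 : (Submodule.span K {x1} : Submodule K V) ≤ E1 :=
      Submodule.span_le.2 (by simpa using hx1)
    -- span x1 ⊔ L = span x1 ⊔ span x2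
    have hkey : Submodule.span K {x1} ⊔ L = Submodule.span K {x1} ⊔ Submodule.span K {x2} := by
      rw [← hspan]
      apply le_antisymm
      · refine sup_le le_sup_left (Submodule.span_le.2 (Set.singleton_subset_iff.2 ?_))
        rw [← hx12]
        exact Submodule.add_mem _
          (Submodule.mem_sup_left (Submodule.mem_span_singleton_self x1))
          (Submodule.mem_sup_right (Submodule.mem_span_singleton_self x2))
      · refine sup_le le_sup_left (Submodule.span_le.2 (Set.singleton_subset_iff.2 ?_))
        have h' : x2 = x - x1 := by rw [← hx12]; abel
        rw [h']
        exact Submodule.sub_mem _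
          (Submodule.mem_sup_right (Submodule.mem_span_singleton_self x))
          (Submodule.mem_sup_left (Submodule.mem_span_singleton_self x1))
    have hsub := hR3 (Submodule.span K {x1}) L
    have hmeet := (hR1 (Submodule.span K {x1} ⊓ L)).1
    have hadd := hsum (Submodule.span K {x1}) hs1 (Submodule.span K {x2}) hs2
    rw [hkey, hadd] at hsub
    omega
end

section
/- Let $f$ be a non-negative integer-valued increasing submodular function on the subspaces of a finite-dimensional vector space $E$ with $f(0)=0$. Then $r(A) = \min_{X \subseteq E} \{ f(X) + \dim A - \dim(A \cap X) \}$ satisfies the $q$-matroid rank axioms: (R1) $0 \le r(A) \le \dim A$; (R2) $A \subseteq B$ implies $r(A) \le r(B)$; (R3) $r(A+B) + r(A \cap B) \le r(A) + r(B)$. -/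
open Module Submodule

theorem rank_from_submodular_function
    {K V : Type*} [Field K] [AddCommGroup V] [Module K V] [FiniteDimensional K V]
    (f : Submodule K V → ℤ)
    (hf0 : ∀ A : Submodule K V, 0 ≤ f A)
    (hmono : ∀ A B : Submodule K V, A ≤ B → f A ≤ f B)
    (hsub : ∀ A B : Submodule K V, f (A ⊔ B) + f (A ⊓ B) ≤ f A + f B)
    (hbot : f ⊥ = 0)
    (r : Submodule K V → ℤ)
    (hr : ∀ A : Submodule K V, IsLeast
      {y : ℤ | ∃ X : Submodule K V,
        y = f X + (finrank K A : ℤ) - (finrank K ↥(A ⊓ X) : ℤ)} (r A)) :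
    (∀ A : Submodule K V, 0 ≤ r A ∧ r A ≤ (finrank K A : ℤ)) ∧
    (∀ A B : Submodule K V, A ≤ B → r A ≤ r B) ∧
    (∀ A B : Submodule K V, r (A ⊔ B) + r (A ⊓ B) ≤ r A + r B) := by
  have dimmono : ∀ A B : Submodule K V, A ≤ B →
      (finrank K A : ℤ) ≤ (finrank K B : ℤ) := by
    intro A B h
    exact_mod_cast Submodule.finrank_mono h
  have dimeq : ∀ A B : Submodule K V,
      (finrank K ↥(A ⊔ B) : ℤ) + (finrank K ↥(A ⊓ B) : ℤ)
        = (finrank K A : ℤ) + (finrank K B : ℤ) := by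
    intro A B
    exact_mod_cast Submodule.finrank_sup_add_finrank_inf_eq A B
  refine ⟨?_, ?_, ?_⟩
  · intro A
    constructor
    · obtain ⟨X, hX⟩ := (hr A).1
      have h1 : (finrank K ↥(A ⊓ X) : ℤ) ≤ (finrank K A : ℤ) :=
        dimmono _ _ inf_le_left
      have := hf0 X
      omega
    · have hb : f ⊥ + (finrank K A : ℤ) - (finrank K ↥(A ⊓ ⊥) : ℤ)
          ∈ {y : ℤ | ∃ X : Submodule K V,
            y = f X + (finrank K A : ℤ) - (finrank K ↥(A ⊓ X) : ℤ)} := ⟨⊥, rfl⟩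
      have := (hr A).2 hb
      simp only [inf_bot_eq, hbot, finrank_bot] at this
      omega
  · intro A B hAB
    obtain ⟨X, hX⟩ := (hr B).1
    have h1 : r A ≤ f X + (finrank K A : ℤ) - (finrank K ↥(A ⊓ X) : ℤ) :=
      (hr A).2 ⟨X, rfl⟩
    -- dim A + dim (B ⊓ X) ≤ dim B + dim (A ⊓ X)
    have key : (finrank K A : ℤ) + (finrank K ↥(B ⊓ X) : ℤ)
        ≤ (finrank K B : ℤ) + (finrank K ↥(A ⊓ X) : ℤ) := by
      have e := dimeq A (B ⊓ X)
      have h2 : (finrank K ↥(A ⊔ B ⊓ X) : ℤ) ≤ (finrank K B : ℤ) :=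
        dimmono _ _ (sup_le hAB inf_le_left)
      have h3 : A ⊓ (B ⊓ X) = A ⊓ X := by
        rw [← inf_assoc, inf_eq_left.mpr hAB]
      rw [h3] at e
      omega
    omega
  · intro A B
    obtain ⟨X, hX⟩ := (hr A).1
    obtain ⟨Y, hY⟩ := (hr B).1
    have h1 : r (A ⊔ B) ≤ f (X ⊔ Y) + (finrank K ↥(A ⊔ B) : ℤ)
        - (finrank K ↥((A ⊔ B) ⊓ (X ⊔ Y)) : ℤ) := (hr (A ⊔ B)).2 ⟨X ⊔ Y, rfl⟩
    have h2 : r (A ⊓ B) ≤ f (X ⊓ Y) + (finrank K ↥(A ⊓ B) : ℤ)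
        - (finrank K ↥((A ⊓ B) ⊓ (X ⊓ Y)) : ℤ) := (hr (A ⊓ B)).2 ⟨X ⊓ Y, rfl⟩
    have hfs := hsub X Y
    have eAB := dimeq A B
    have eCD := dimeq (A ⊓ X) (B ⊓ Y)
    have hsupC : (finrank K ↥(A ⊓ X ⊔ B ⊓ Y) : ℤ)
        ≤ (finrank K ↥((A ⊔ B) ⊓ (X ⊔ Y)) : ℤ) := by
      refine dimmono _ _ (sup_le ?_ ?_)
      · exact le_inf (le_trans inf_le_left le_sup_left) (le_trans inf_le_right le_sup_left)
      · exact le_inf (le_trans inf_le_left le_sup_right) (le_trans inf_le_right le_sup_right)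
    have hinfC : (finrank K ↥(A ⊓ X ⊓ (B ⊓ Y)) : ℤ)
        ≤ (finrank K ↥((A ⊓ B) ⊓ (X ⊓ Y)) : ℤ) := by
      refine dimmono _ _ (le_inf (le_inf ?_ ?_) (le_inf ?_ ?_))
      · exact le_trans inf_le_left inf_le_left
      · exact le_trans inf_le_right inf_le_left
      · exact le_trans inf_le_left inf_le_right
      · exact le_trans inf_le_right inf_le_right
    omega
end

section
/- Let $f$ be a non-negative integer-valued increasing submodular function on subspaces of $E$ with $f(0)=0$, and define $r(A) = \min_{X \subseteq E} \{ f(X) + \dim A - \dim(A \cap X) \}$. Then for any subspace $A$, the minimum is already attained among subspaces of $A$: $r(A) = \min_{X' \subseteq A} \{ f(X') + \dim A - \dim X' \}$. -/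
open Module Submodule

theorem rank_min_attained_inside
    {K V : Type*} [Field K] [AddCommGroup V] [Module K V] [FiniteDimensional K V]
    (f : Submodule K V → ℤ)
    (hf0 : ∀ A : Submodule K V, 0 ≤ f A)
    (hmono : ∀ A B : Submodule K V, A ≤ B → f A ≤ f B)
    (hsub : ∀ A B : Submodule K V, f (A ⊔ B) + f (A ⊓ B) ≤ f A + f B)
    (hbot : f ⊥ = 0)
    (r : Submodule K V → ℤ)
    (hr : ∀ A : Submodule K V, IsLeast
      {y : ℤ | ∃ X : Submodule K V,
        y = f X + (finrank K A : ℤ) - (finrank K ↥(A ⊓ X) : ℤ)} (r A)) :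
    ∀ A : Submodule K V, IsLeast
      {y : ℤ | ∃ X ≤ A, y = f X + (finrank K A : ℤ) - (finrank K X : ℤ)} (r A) := by
  intro A
  obtain ⟨⟨X, hX⟩, hlb⟩ := hr A
  constructor
  · refine ⟨A ⊓ X, inf_le_left, ?_⟩
    have h1 : f (A ⊓ X) ≤ f X := hmono _ _ inf_le_right
    have h2 : r A ≤ f (A ⊓ X) + (finrank K A : ℤ) - (finrank K ↥(A ⊓ (A ⊓ X)) : ℤ) :=
      hlb ⟨A ⊓ X, rfl⟩
    rw [inf_eq_right.mpr (inf_le_left : A ⊓ X ≤ A)] at h2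
    linarith
  · rintro y ⟨X', hXA, rfl⟩
    have h := hlb ⟨X', rfl⟩
    rwa [inf_eq_right.mpr hXA] at h
end

section
/- Let $f$ be a non-negative integer-valued increasing submodular function on subspaces of $E$ with $f(0)=0$, and $r(A) = \min_{X' \subseteq A}\{f(X') + \dim A - \dim X'\}$. Then for a subspace $I \subseteq E$: $r(I) = \dim I$ if and only if $\dim I' \le f(I')$ for every subspace $I' \subseteq I$. -/
open Module Submodule

theorem independent_iff_dim_le_f
    {K V : Type*} [Field K] [AddCommGroup V] [Module K V] [FiniteDimensional K V]
    (f : Submodule K V → ℤ)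
    (hf0 : ∀ A : Submodule K V, 0 ≤ f A)
    (hmono : ∀ A B : Submodule K V, A ≤ B → f A ≤ f B)
    (hsub : ∀ A B : Submodule K V, f (A ⊔ B) + f (A ⊓ B) ≤ f A + f B)
    (hbot : f ⊥ = 0)
    (r : Submodule K V → ℤ)
    (hr : ∀ A : Submodule K V, IsLeast
      {y : ℤ | ∃ X ≤ A, y = f X + (finrank K A : ℤ) - (finrank K X : ℤ)} (r A)) :
    ∀ I : Submodule K V,
      r I = (finrank K I : ℤ) ↔ ∀ I' ≤ I, (finrank K I' : ℤ) ≤ f I' := by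
  intro I
  obtain ⟨hmem, hlb⟩ := hr I
  constructor
  · intro hrI X hXI
    have hX : f X + (finrank K I : ℤ) - (finrank K X : ℤ) ∈
        {y : ℤ | ∃ X ≤ I, y = f X + (finrank K I : ℤ) - (finrank K X : ℤ)} := ⟨X, hXI, rfl⟩
    have := hlb hX
    rw [hrI] at this
    linarith
  · intro h
    have hle : r I ≤ (finrank K I : ℤ) := by
      have := hlb ⟨⊥, bot_le, rfl⟩
      simpa [hbot, finrank_bot] using this
    have hge : (finrank K I : ℤ) ≤ r I := by
      obtain ⟨X, hXI, hXeq⟩ := hmem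
      have := h X hXI
      omega
    omega
end

section
/- Let $M_1=(E,r_1)$ and $M_2=(E,r_2)$ be $q$-matroids on the same ground space $E$. Then the function $r(A) = \min_{X \subseteq A}\{ r_1(X) + r_2(X) + \dim A - \dim X \}$ is the rank function of a $q$-matroid (the matroid union $M_1 \vee M_2$), i.e., $r$ satisfies (R1), (R2), (R3). -/
open Module Submodule

theorem matroid_union_is_qmatroid
    {K V : Type*} [Field K] [AddCommGroup V] [Module K V] [FiniteDimensional K V]
    (r1 r2 : Submodule K V → ℤ)
    (hR1₁ : ∀ A : Submodule K V, 0 ≤ r1 A ∧ r1 A ≤ (finrank K A : ℤ))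
    (hR2₁ : ∀ A B : Submodule K V, A ≤ B → r1 A ≤ r1 B)
    (hR3₁ : ∀ A B : Submodule K V, r1 (A ⊔ B) + r1 (A ⊓ B) ≤ r1 A + r1 B)
    (hR1₂ : ∀ A : Submodule K V, 0 ≤ r2 A ∧ r2 A ≤ (finrank K A : ℤ))
    (hR2₂ : ∀ A B : Submodule K V, A ≤ B → r2 A ≤ r2 B)
    (hR3₂ : ∀ A B : Submodule K V, r2 (A ⊔ B) + r2 (A ⊓ B) ≤ r2 A + r2 B)
    (r : Submodule K V → ℤ)
    (hr : ∀ A : Submodule K V, IsLeast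
      {y : ℤ | ∃ X ≤ A, y = r1 X + r2 X + (finrank K A : ℤ) - (finrank K X : ℤ)} (r A)) :
    (∀ A : Submodule K V, 0 ≤ r A ∧ r A ≤ (finrank K A : ℤ)) ∧
    (∀ A B : Submodule K V, A ≤ B → r A ≤ r B) ∧
    (∀ A B : Submodule K V, r (A ⊔ B) + r (A ⊓ B) ≤ r A + r B) := by
  have dmono : ∀ {X Y : Submodule K V}, X ≤ Y →
      (finrank K X : ℤ) ≤ (finrank K Y : ℤ) := by
    intro X Y h
    exact_mod_cast Submodule.finrank_mono h
  have dsub : ∀ X Y : Submodule K V,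
      (finrank K ↥(X ⊔ Y) : ℤ) + (finrank K ↥(X ⊓ Y) : ℤ)
        = (finrank K X : ℤ) + (finrank K Y : ℤ) := by
    intro X Y
    exact_mod_cast Submodule.finrank_sup_add_finrank_inf_eq X Y
  refine ⟨?_, ?_, ?_⟩
  · intro A
    obtain ⟨⟨X, hXA, hX⟩, hlb⟩ := hr A
    constructor
    · have h1 := (hR1₁ X).1
      have h2 := (hR1₂ X).1
      have h3 := dmono hXA
      rw [hX]; linarith
    · have hmem : (r1 (⊥ : Submodule K V) + r2 (⊥ : Submodule K V) +
          (finrank K A : ℤ) - (finrank K (⊥ : Submodule K V) : ℤ)) ∈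
          {y : ℤ | ∃ X ≤ A, y = r1 X + r2 X + (finrank K A : ℤ) - (finrank K X : ℤ)} :=
        ⟨⊥, bot_le, rfl⟩
      have := hlb hmem
      have h1 := (hR1₁ ⊥).2
      have h2 := (hR1₂ ⊥).2
      simp [finrank_bot] at h1 h2
      have hb : (finrank K (⊥ : Submodule K V) : ℤ) = 0 := by
        simp [finrank_bot]
      rw [hb] at this
      linarith
  · intro A B hAB
    obtain ⟨⟨X, hXB, hX⟩, _⟩ := hr B
    have hmem : (r1 (X ⊓ A) + r2 (X ⊓ A) + (finrank K A : ℤ)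
        - (finrank K ↥(X ⊓ A) : ℤ)) ∈
        {y : ℤ | ∃ Y ≤ A, y = r1 Y + r2 Y + (finrank K A : ℤ) - (finrank K Y : ℤ)} :=
      ⟨X ⊓ A, inf_le_right, rfl⟩
    have h1 := (hr A).2 hmem
    have h2 := hR2₁ (X ⊓ A) X inf_le_left
    have h3 := hR2₂ (X ⊓ A) X inf_le_left
    have h4 := dsub X A
    have h5 : (finrank K ↥(X ⊔ A) : ℤ) ≤ (finrank K B : ℤ) :=
      dmono (sup_le hXB hAB)
    rw [hX]
    linarith
  · intro A B
    obtain ⟨⟨X, hXA, hX⟩, _⟩ := hr A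
    obtain ⟨⟨Y, hYB, hY⟩, _⟩ := hr B
    have hmem1 : (r1 (X ⊔ Y) + r2 (X ⊔ Y) + (finrank K ↥(A ⊔ B) : ℤ)
        - (finrank K ↥(X ⊔ Y) : ℤ)) ∈
        {y : ℤ | ∃ Z ≤ A ⊔ B, y = r1 Z + r2 Z + (finrank K ↥(A ⊔ B) : ℤ) - (finrank K Z : ℤ)} :=
      ⟨X ⊔ Y, sup_le_sup hXA hYB, rfl⟩
    have hmem2 : (r1 (X ⊓ Y) + r2 (X ⊓ Y) + (finrank K ↥(A ⊓ B) : ℤ)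
        - (finrank K ↥(X ⊓ Y) : ℤ)) ∈
        {y : ℤ | ∃ Z ≤ A ⊓ B, y = r1 Z + r2 Z + (finrank K ↥(A ⊓ B) : ℤ) - (finrank K Z : ℤ)} :=
      ⟨X ⊓ Y, inf_le_inf hXA hYB, rfl⟩
    have h1 := (hr (A ⊔ B)).2 hmem1
    have h2 := (hr (A ⊓ B)).2 hmem2
    have h3 := hR3₁ X Y
    have h4 := hR3₂ X Y
    have h5 := dsub X Y
    have h6 := dsub A B
    rw [hX, hY]
    linarith
end

section
/- Let $M_1=(E,r_1)$ and $M_2=(E,r_2)$ be $q$-matroids on the same ground space. A subspace $I$ is independent in the matroid union $M_1 \vee M_2$ if and only if every subspace $J \subseteq I$ can be written as $J = I_1 \oplus I_2$ with $I_1$ independent in $M_1$ and $I_2$ independent in $M_2$. -/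
open Module Submodule

section QMHelpers
variable {K V : Type*} [Field K] [AddCommGroup V] [Module K V] [FiniteDimensional K V]

omit [FiniteDimensional K V] in
lemma qm_rank_bot (r : Submodule K V → ℤ)
    (hR1 : ∀ A : Submodule K V, 0 ≤ r A ∧ r A ≤ (finrank K A : ℤ)) : r ⊥ = 0 := by
  have h := hR1 (⊥ : Submodule K V)
  simp [finrank_bot] at h
  omega

lemma qm_exists_compl (J T : Submodule K V) (hTJ : T ≤ J) :
    ∃ H, H ≤ J ∧ T ⊓ H = ⊥ ∧ T ⊔ H = J := by
  obtain ⟨H', hH'⟩ := Submodule.exists_isCompl (T.comap J.subtype)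
  have hT : (T.comap J.subtype).map J.subtype = T := by
    rw [Submodule.map_comap_subtype]
    exact inf_eq_right.mpr hTJ
  refine ⟨H'.map J.subtype, Submodule.map_subtype_le J H', ?_, ?_⟩
  · rw [← hT, ← Submodule.map_inf _ (Submodule.injective_subtype J),
      disjoint_iff.mp hH'.disjoint, Submodule.map_bot]
  · rw [← hT, ← Submodule.map_sup, codisjoint_iff.mp hH'.codisjoint, Submodule.map_top,
      Submodule.range_subtype]

lemma qm_reach (r : Submodule K V → ℤ)
    (hR2 : ∀ A B : Submodule K V, A ≤ B → r A ≤ r B)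
    (hR3 : ∀ A B : Submodule K V, r (A ⊔ B) + r (A ⊓ B) ≤ r A + r B) :
    ∀ n : ℕ, ∀ A J : Submodule K V, A ≤ J → finrank K J ≤ finrank K A + n →
      (∀ v ∈ J, r (A ⊔ span K {v}) ≤ r A) → r J ≤ r A := by
  intro n
  induction n with
  | zero =>
    intro A J hAJ hd _
    have : A = J := Submodule.eq_of_le_of_finrank_le hAJ (by omega)
    exact le_of_eq (by rw [this])
  | succ n ih =>
    intro A J hAJ hd hflat
    by_cases hJA : J ≤ A
    · exact hR2 _ _ hJA
    · obtain ⟨v, hvJ, hvA⟩ := SetLike.not_le_iff_exists.mp hJA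
      have hvA' : v ∈ A ⊔ span K {v} := mem_sup_right (subset_span rfl)
      have hAA' : A < A ⊔ span K {v} :=
        lt_of_le_of_ne le_sup_left (fun h => hvA (h ▸ hvA'))
      have hA'J : A ⊔ span K {v} ≤ J :=
        sup_le hAJ (span_le.mpr (Set.singleton_subset_iff.mpr hvJ))
      have hdlt : finrank K A < finrank K ↥(A ⊔ span K {v}) :=
        Submodule.finrank_lt_finrank_of_lt hAA'
      have hrA' : r (A ⊔ span K {v}) = r A :=
        le_antisymm (hflat v hvJ) (hR2 _ _ le_sup_left)
      have hflat' : ∀ w ∈ J, r ((A ⊔ span K {v}) ⊔ span K {w}) ≤ r (A ⊔ span K {v}) := by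
        intro w hwJ
        have h3 := hR3 (A ⊔ span K {v}) (A ⊔ span K {w})
        have hsup : (A ⊔ span K {v}) ⊔ (A ⊔ span K {w}) = (A ⊔ span K {v}) ⊔ span K {w} := by
          rw [sup_sup_sup_comm, sup_idem, sup_assoc]
        have hinf : r A ≤ r ((A ⊔ span K {v}) ⊓ (A ⊔ span K {w})) :=
          hR2 _ _ (le_inf le_sup_left le_sup_left)
        have hw : r (A ⊔ span K {w}) ≤ r A := hflat w hwJ
        rw [hsup] at h3
        omega
      have := ih (A ⊔ span K {v}) J hA'J (by omega) hflat'
      omega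

lemma qm_exists_rank_one (r : Submodule K V → ℤ)
    (hR1 : ∀ A : Submodule K V, 0 ≤ r A ∧ r A ≤ (finrank K A : ℤ))
    (hR2 : ∀ A B : Submodule K V, A ≤ B → r A ≤ r B)
    (hR3 : ∀ A B : Submodule K V, r (A ⊔ B) + r (A ⊓ B) ≤ r A + r B)
    (J : Submodule K V) (hJ : 1 ≤ r J) :
    ∃ v ∈ J, v ≠ 0 ∧ r (span K {v}) = 1 := by
  have hbot : r ⊥ = 0 := qm_rank_bot r hR1
  by_contra hcon
  push_neg at hcon
  have hflat : ∀ v ∈ J, r (⊥ ⊔ span K {v}) ≤ r ⊥ := by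
    intro v hv
    rw [bot_sup_eq, hbot]
    by_cases hv0 : v = 0
    · simp [hv0, hbot]
    · have h1 : r (span K {v}) ≤ (finrank K (span K {v}) : ℤ) := (hR1 _).2
      rw [finrank_span_singleton hv0] at h1
      have h0 : 0 ≤ r (span K {v}) := (hR1 _).1
      have := hcon v hv hv0
      omega
  have := qm_reach r hR2 hR3 (finrank K J) ⊥ J bot_le (by simp [finrank_bot]) hflat
  omega

omit [FiniteDimensional K V] in
lemma qm_contract_R1 (r : Submodule K V → ℤ) (W : Submodule K V)
    (hR1 : ∀ A : Submodule K V, 0 ≤ r A ∧ r A ≤ (finrank K A : ℤ))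
    (hR2 : ∀ A B : Submodule K V, A ≤ B → r A ≤ r B)
    (hR3 : ∀ A B : Submodule K V, r (A ⊔ B) + r (A ⊓ B) ≤ r A + r B) :
    ∀ A : Submodule K V, 0 ≤ r (A ⊔ W) - r W ∧ r (A ⊔ W) - r W ≤ (finrank K A : ℤ) := by
  intro A
  constructor
  · have := hR2 W (A ⊔ W) le_sup_right
    omega
  · have h3 := hR3 A W
    have h0 : 0 ≤ r (A ⊓ W) := (hR1 _).1
    have hA : r A ≤ (finrank K A : ℤ) := (hR1 A).2
    omega

omit [FiniteDimensional K V] in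
lemma qm_contract_R2 (r : Submodule K V → ℤ) (W : Submodule K V)
    (hR2 : ∀ A B : Submodule K V, A ≤ B → r A ≤ r B) :
    ∀ A B : Submodule K V, A ≤ B → r (A ⊔ W) - r W ≤ r (B ⊔ W) - r W := by
  intro A B hAB
  have := hR2 (A ⊔ W) (B ⊔ W) (sup_le_sup_right hAB W)
  omega

omit [FiniteDimensional K V] in
lemma qm_contract_R3 (r : Submodule K V → ℤ) (W : Submodule K V)
    (hR2 : ∀ A B : Submodule K V, A ≤ B → r A ≤ r B)
    (hR3 : ∀ A B : Submodule K V, r (A ⊔ B) + r (A ⊓ B) ≤ r A + r B) :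
    ∀ A B : Submodule K V,
      (r ((A ⊔ B) ⊔ W) - r W) + (r ((A ⊓ B) ⊔ W) - r W)
        ≤ (r (A ⊔ W) - r W) + (r (B ⊔ W) - r W) := by
  intro A B
  have h3 := hR3 (A ⊔ W) (B ⊔ W)
  have hsup : (A ⊔ W) ⊔ (B ⊔ W) = (A ⊔ B) ⊔ W := by
    rw [sup_sup_sup_comm, sup_idem]
  have hinf : r ((A ⊓ B) ⊔ W) ≤ r ((A ⊔ W) ⊓ (B ⊔ W)) :=
    hR2 _ _ (le_inf (sup_le_sup_right inf_le_left W) (sup_le_sup_right inf_le_right W))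
  rw [hsup] at h3
  omega

lemma qm_union_decomp :
    ∀ n : ℕ, ∀ r1 r2 : Submodule K V → ℤ,
      (∀ A, 0 ≤ r1 A ∧ r1 A ≤ (finrank K A : ℤ)) →
      (∀ A B, A ≤ B → r1 A ≤ r1 B) →
      (∀ A B, r1 (A ⊔ B) + r1 (A ⊓ B) ≤ r1 A + r1 B) →
      (∀ A, 0 ≤ r2 A ∧ r2 A ≤ (finrank K A : ℤ)) →
      (∀ A B, A ≤ B → r2 A ≤ r2 B) →
      (∀ A B, r2 (A ⊔ B) + r2 (A ⊓ B) ≤ r2 A + r2 B) →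
      ∀ J : Submodule K V, finrank K J ≤ n →
        (∀ X ≤ J, (finrank K X : ℤ) ≤ r1 X + r2 X) →
        ∃ I1 I2 : Submodule K V, I1 ⊓ I2 = ⊥ ∧ I1 ⊔ I2 = J ∧
          r1 I1 = (finrank K I1 : ℤ) ∧ r2 I2 = (finrank K I2 : ℤ) := by
  intro n
  induction n with
  | zero =>
    intro r1 r2 hR11 _ _ hR12 _ _ J hJn _
    have hJ : J = ⊥ := Submodule.finrank_eq_zero.mp (by omega)
    refine ⟨⊥, ⊥, inf_idem ⊥, by simp [hJ], ?_, ?_⟩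
    · rw [qm_rank_bot r1 hR11]; simp [finrank_bot]
    · rw [qm_rank_bot r2 hR12]; simp [finrank_bot]
  | succ n ih =>
    intro r1 r2 hR11 hR21 hR31 hR12 hR22 hR32 J hJn hstar
    have h1bot : r1 ⊥ = 0 := qm_rank_bot r1 hR11
    have h2bot : r2 ⊥ = 0 := qm_rank_bot r2 hR12
    by_cases hJ0 : finrank K J = 0
    · have hJ : J = ⊥ := Submodule.finrank_eq_zero.mp hJ0
      exact ⟨⊥, ⊥, inf_idem ⊥, by simp [hJ], by simp [h1bot, finrank_bot],
        by simp [h2bot, finrank_bot]⟩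
    by_cases hr1J : r1 J ≤ 0
    · have hJs := hstar J le_rfl
      have h2 : r2 J = (finrank K J : ℤ) := le_antisymm (hR12 J).2 (by omega)
      exact ⟨⊥, J, bot_inf_eq J, bot_sup_eq J, by simp [h1bot, finrank_bot], h2⟩
    by_cases hr2J : r2 J ≤ 0
    · have hJs := hstar J le_rfl
      have h1 : r1 J = (finrank K J : ℤ) := le_antisymm (hR11 J).2 (by omega)
      exact ⟨J, ⊥, inf_bot_eq J, sup_bot_eq J, h1, by simp [h2bot, finrank_bot]⟩
    by_cases htight : ∃ T, T ≤ J ∧ T ≠ ⊥ ∧ T ≠ J ∧ r1 T + r2 T ≤ (finrank K T : ℤ)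
    · -- branch T : proper nonzero tight subspace
      obtain ⟨T, hTJ, hTne0, hTneJ, hTt⟩ := htight
      have htight' : r1 T + r2 T = (finrank K T : ℤ) := le_antisymm hTt (hstar T hTJ)
      have hTlt : finrank K T < finrank K J :=
        Submodule.finrank_lt_finrank_of_lt (lt_of_le_of_ne hTJ hTneJ)
      have hT0 : 0 < finrank K T := by
        rcases Nat.eq_zero_or_pos (finrank K T) with h | h
        · exact absurd (Submodule.finrank_eq_zero.mp h) hTne0
        · exact h
      obtain ⟨A1, A2, hAinf, hAsup, hA1, hA2⟩ :=
        ih r1 r2 hR11 hR21 hR31 hR12 hR22 hR32 T (by omega)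
          (fun X hX => hstar X (le_trans hX hTJ))
      have hA1T : A1 ≤ T := hAsup ▸ le_sup_left
      have hA2T : A2 ≤ T := hAsup ▸ le_sup_right
      have hAdim : finrank K A1 + finrank K A2 = finrank K T := by
        have := Submodule.finrank_sup_add_finrank_inf_eq A1 A2
        rw [hAinf, hAsup, finrank_bot] at this
        omega
      have hkey1 : r1 T = (finrank K A1 : ℤ) := by
        have h1 := hR21 A1 T hA1T
        have h2 := hR22 A2 T hA2T
        omega
      have hkey2 : r2 T = (finrank K A2 : ℤ) := by
        have h1 := hR21 A1 T hA1T
        have h2 := hR22 A2 T hA2T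
        omega
      obtain ⟨H, hHJ, hTH, hTHsup⟩ := qm_exists_compl J T hTJ
      have hHdim : finrank K T + finrank K H = finrank K J := by
        have := Submodule.finrank_sup_add_finrank_inf_eq T H
        rw [hTH, hTHsup, finrank_bot] at this
        omega
      set s1 : Submodule K V → ℤ := fun X => r1 (X ⊔ T) - r1 T with hs1
      set s2 : Submodule K V → ℤ := fun X => r2 (X ⊔ T) - r2 T with hs2
      have hstar' : ∀ X ≤ H, (finrank K X : ℤ) ≤ s1 X + s2 X := by
        intro X hXH
        have hXT : X ⊓ T = ⊥ := by
          rw [← le_bot_iff, ← hTH]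
          exact le_inf (inf_le_left.trans hXH) inf_le_right |>.trans
            (le_inf inf_le_right inf_le_left)
        have hXdim : finrank K ↥(X ⊔ T) = finrank K X + finrank K T := by
          have := Submodule.finrank_sup_add_finrank_inf_eq X T
          rw [hXT, finrank_bot] at this
          omega
        have hle : X ⊔ T ≤ J := sup_le (hXH.trans hHJ) hTJ
        have := hstar (X ⊔ T) hle
        rw [hXdim] at this
        simp only [hs1, hs2]
        push_cast at this ⊢
        omega
      obtain ⟨B1, B2, hBinf, hBsup, hB1, hB2⟩ :=
        ih s1 s2 (qm_contract_R1 r1 T hR11 hR21 hR31) (qm_contract_R2 r1 T hR21)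
          (qm_contract_R3 r1 T hR21 hR31) (qm_contract_R1 r2 T hR12 hR22 hR32)
          (qm_contract_R2 r2 T hR22) (qm_contract_R3 r2 T hR22 hR32) H (by omega) hstar'
      have hB1H : B1 ≤ H := hBsup ▸ le_sup_left
      have hB2H : B2 ≤ H := hBsup ▸ le_sup_right
      have hBdim : finrank K B1 + finrank K B2 = finrank K H := by
        have := Submodule.finrank_sup_add_finrank_inf_eq B1 B2
        rw [hBinf, hBsup, finrank_bot] at this
        omega
      have hB1T : r1 (B1 ⊔ T) - r1 T = (finrank K B1 : ℤ) := hB1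
      have hB2T : r2 (B2 ⊔ T) - r2 T = (finrank K B2 : ℤ) := hB2
      have hd1 : finrank K ↥(A1 ⊔ B1) = finrank K A1 + finrank K B1 := by
        have hinf : A1 ⊓ B1 = ⊥ := by
          rw [← le_bot_iff, ← hTH]
          exact inf_le_inf hA1T hB1H
        have := Submodule.finrank_sup_add_finrank_inf_eq A1 B1
        rw [hinf, finrank_bot] at this
        omega
      have hd2 : finrank K ↥(A2 ⊔ B2) = finrank K A2 + finrank K B2 := by
        have hinf : A2 ⊓ B2 = ⊥ := by
          rw [← le_bot_iff, ← hTH]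
          exact inf_le_inf hA2T hB2H
        have := Submodule.finrank_sup_add_finrank_inf_eq A2 B2
        rw [hinf, finrank_bot] at this
        omega
      have hsupJ : (A1 ⊔ B1) ⊔ (A2 ⊔ B2) = J := by
        rw [sup_sup_sup_comm, hAsup, hBsup, hTHsup]
      refine ⟨A1 ⊔ B1, A2 ⊔ B2, ?_, hsupJ, ?_, ?_⟩
      · have := Submodule.finrank_sup_add_finrank_inf_eq (A1 ⊔ B1) (A2 ⊔ B2)
        rw [hsupJ] at this
        rw [← Submodule.finrank_eq_zero (R := K)]
        omega
      · have hub := (hR11 (A1 ⊔ B1)).2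
        have hsub := hR31 (A1 ⊔ B1) T
        have hsupeq : (A1 ⊔ B1) ⊔ T = B1 ⊔ T := by
          rw [sup_comm A1 B1, sup_assoc, sup_eq_right.mpr hA1T]
        have hinfge : r1 A1 ≤ r1 ((A1 ⊔ B1) ⊓ T) :=
          hR21 _ _ (le_inf le_sup_left hA1T)
        rw [hsupeq] at hsub
        rw [hd1]
        push_cast
        omega
      · have hub := (hR12 (A2 ⊔ B2)).2
        have hsub := hR32 (A2 ⊔ B2) T
        have hsupeq : (A2 ⊔ B2) ⊔ T = B2 ⊔ T := by
          rw [sup_comm A2 B2, sup_assoc, sup_eq_right.mpr hA2T]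
        have hinfge : r2 A2 ≤ r2 ((A2 ⊔ B2) ⊓ T) :=
          hR22 _ _ (le_inf le_sup_left hA2T)
        rw [hsupeq] at hsub
        rw [hd2]
        push_cast
        omega
    · -- branch x : no proper nonzero tight subspace
      push_neg at htight
      have hnot : ∀ X ≤ J, X ≠ ⊥ → X ≠ J → (finrank K X : ℤ) + 1 ≤ r1 X + r2 X := by
        intro X hX h0 hJ'
        have := htight X hX h0 hJ'
        omega
      obtain ⟨v, hvJ, hv0, hvr⟩ :=
        qm_exists_rank_one r1 hR11 hR21 hR31 J (by omega)
      set x : Submodule K V := span K {v} with hx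
      have hxJ : x ≤ J := span_le.mpr (Set.singleton_subset_iff.mpr hvJ)
      have hxdim : finrank K x = 1 := finrank_span_singleton hv0
      obtain ⟨H, hHJ, hxH, hxHsup⟩ := qm_exists_compl J x hxJ
      have hHdim : 1 + finrank K H = finrank K J := by
        have := Submodule.finrank_sup_add_finrank_inf_eq x H
        rw [hxH, hxHsup, finrank_bot, hxdim] at this
        omega
      set s1 : Submodule K V → ℤ := fun X => r1 (X ⊔ x) - r1 x with hs1
      have hstar' : ∀ X ≤ H, (finrank K X : ℤ) ≤ s1 X + r2 X := by
        intro X hXH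
        by_cases hX0 : X = ⊥
        · subst hX0
          simp only [hs1, bot_sup_eq, h2bot, finrank_bot]
          push_cast
          omega
        · have hXJ' : X ≤ J := hXH.trans hHJ
          have hXH' : finrank K X ≤ finrank K H := Submodule.finrank_mono hXH
          have hXneJ : X ≠ J := by
            intro h
            rw [h] at hXH'
            omega
          have h := hnot X hXJ' hX0 hXneJ
          have hmono := hR21 X (X ⊔ x) le_sup_left
          simp only [hs1]
          omega
      obtain ⟨B1, B2, hBinf, hBsup, hB1, hB2⟩ :=
        ih s1 r2 (qm_contract_R1 r1 x hR11 hR21 hR31) (qm_contract_R2 r1 x hR21)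
          (qm_contract_R3 r1 x hR21 hR31) hR12 hR22 hR32 H (by omega) hstar'
      have hB1H : B1 ≤ H := hBsup ▸ le_sup_left
      have hB1' : r1 (B1 ⊔ x) - r1 x = (finrank K B1 : ℤ) := hB1
      have hBdim : finrank K B1 + finrank K B2 = finrank K H := by
        have := Submodule.finrank_sup_add_finrank_inf_eq B1 B2
        rw [hBinf, hBsup, finrank_bot] at this
        omega
      have hB1x : B1 ⊓ x = ⊥ := by
        rw [← le_bot_iff, ← hxH]
        exact le_inf inf_le_right (inf_le_left.trans hB1H)
      have hd1 : finrank K ↥(B1 ⊔ x) = finrank K B1 + 1 := by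
        have := Submodule.finrank_sup_add_finrank_inf_eq B1 x
        rw [hB1x, finrank_bot, hxdim] at this
        omega
      have hsupJ : (x ⊔ B1) ⊔ B2 = J := by
        rw [sup_assoc, hBsup, hxHsup]
      refine ⟨x ⊔ B1, B2, ?_, hsupJ, ?_, hB2⟩
      · have := Submodule.finrank_sup_add_finrank_inf_eq (x ⊔ B1) B2
        rw [hsupJ] at this
        have hd1' : finrank K ↥(x ⊔ B1) = finrank K B1 + 1 := by
          rw [sup_comm x B1]
          exact hd1
        rw [← Submodule.finrank_eq_zero (R := K)]
        omega
      · have hub := (hR11 (B1 ⊔ x)).2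
        rw [sup_comm x B1, hd1]
        rw [hd1] at hub
        push_cast at hub ⊢
        omega

end QMHelpers

theorem independent_in_union_iff_decomposition
    {K V : Type*} [Field K] [AddCommGroup V] [Module K V] [FiniteDimensional K V]
    (r1 r2 : Submodule K V → ℤ)
    (hR1₁ : ∀ A : Submodule K V, 0 ≤ r1 A ∧ r1 A ≤ (finrank K A : ℤ))
    (hR2₁ : ∀ A B : Submodule K V, A ≤ B → r1 A ≤ r1 B)
    (hR3₁ : ∀ A B : Submodule K V, r1 (A ⊔ B) + r1 (A ⊓ B) ≤ r1 A + r1 B)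
    (hR1₂ : ∀ A : Submodule K V, 0 ≤ r2 A ∧ r2 A ≤ (finrank K A : ℤ))
    (hR2₂ : ∀ A B : Submodule K V, A ≤ B → r2 A ≤ r2 B)
    (hR3₂ : ∀ A B : Submodule K V, r2 (A ⊔ B) + r2 (A ⊓ B) ≤ r2 A + r2 B)
    (r : Submodule K V → ℤ)
    (hr : ∀ A : Submodule K V, IsLeast
      {y : ℤ | ∃ X ≤ A, y = r1 X + r2 X + (finrank K A : ℤ) - (finrank K X : ℤ)} (r A))
    (I : Submodule K V) :
    r I = (finrank K I : ℤ) ↔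
      ∀ J ≤ I, ∃ I1 I2 : Submodule K V, I1 ⊓ I2 = ⊥ ∧ I1 ⊔ I2 = J ∧
        r1 I1 = (finrank K I1 : ℤ) ∧ r2 I2 = (finrank K I2 : ℤ) := by
  have h1bot : r1 ⊥ = 0 := qm_rank_bot r1 hR1₁
  have h2bot : r2 ⊥ = 0 := qm_rank_bot r2 hR1₂
  constructor
  · intro hI J hJI
    have hstar : ∀ X ≤ J, (finrank K X : ℤ) ≤ r1 X + r2 X := by
      intro X hXJ
      have hXI : X ≤ I := le_trans hXJ hJI
      have hmem : r1 X + r2 X + (finrank K I : ℤ) - (finrank K X : ℤ) ∈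
          {y : ℤ | ∃ X ≤ I, y = r1 X + r2 X + (finrank K I : ℤ) - (finrank K X : ℤ)} :=
        ⟨X, hXI, rfl⟩
      have hle := (hr I).2 hmem
      rw [hI] at hle
      omega
    exact qm_union_decomp (finrank K J) r1 r2 hR1₁ hR2₁ hR3₁ hR1₂ hR2₂ hR3₂ J le_rfl hstar
  · intro hdec
    have hub : r I ≤ (finrank K I : ℤ) := by
      have hmem : (finrank K I : ℤ) ∈
          {y : ℤ | ∃ X ≤ I, y = r1 X + r2 X + (finrank K I : ℤ) - (finrank K X : ℤ)} := by
        refine ⟨⊥, bot_le, ?_⟩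
        rw [h1bot, h2bot, finrank_bot]
        push_cast
        ring
      exact (hr I).2 hmem
    obtain ⟨X, hXI, hX⟩ := (hr I).1
    obtain ⟨I1, I2, hinf, hsup, hI1, hI2⟩ := hdec X hXI
    have hdX : finrank K I1 + finrank K I2 = finrank K X := by
      have := Submodule.finrank_sup_add_finrank_inf_eq I1 I2
      rw [hinf, hsup, finrank_bot] at this
      omega
    have hm1 : r1 I1 ≤ r1 X := hR2₁ I1 X (hsup ▸ le_sup_left)
    have hm2 : r2 I2 ≤ r2 X := hR2₂ I2 X (hsup ▸ le_sup_right)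
    omega
end

section
/- Let $M=(E,r)$ be a $q$-matroid, $\ell$ a $1$-dimensional space not in $E$, and $E' = E \oplus \ell$. Define $r'(A') = r(A)$ where $A \subseteq E$ is the unique subspace with $A' + \ell = A \oplus \ell$ (i.e., $A = (A'+\ell) \cap E$). Then $(E', r')$ is a $q$-matroid, i.e., $r'$ satisfies (R1), (R2), (R3). -/
open Module Submodule

theorem add_loop_is_qmatroid
    {K V : Type*} [Field K] [AddCommGroup V] [Module K V] [FiniteDimensional K V]
    (E L : Submodule K V) (hdisj : E ⊓ L = ⊥) (hsup : E ⊔ L = ⊤)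
    (hL : finrank K L = 1)
    (r : Submodule K V → ℤ)
    (hR1 : ∀ A ≤ E, 0 ≤ r A ∧ r A ≤ (finrank K A : ℤ))
    (hR2 : ∀ A B : Submodule K V, A ≤ E → B ≤ E → A ≤ B → r A ≤ r B)
    (hR3 : ∀ A B : Submodule K V, A ≤ E → B ≤ E →
      r (A ⊔ B) + r (A ⊓ B) ≤ r A + r B)
    (r' : Submodule K V → ℤ)
    (hr' : ∀ A' : Submodule K V, r' A' = r ((A' ⊔ L) ⊓ E)) :
    (∀ A' : Submodule K V, 0 ≤ r' A' ∧ r' A' ≤ (finrank K A' : ℤ)) ∧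
    (∀ A' B' : Submodule K V, A' ≤ B' → r' A' ≤ r' B') ∧
    (∀ A' B' : Submodule K V, r' (A' ⊔ B') + r' (A' ⊓ B') ≤ r' A' + r' B') := by
  set π : Submodule K V → Submodule K V := fun A' => (A' ⊔ L) ⊓ E with hπ
  have hπE : ∀ A', π A' ≤ E := fun A' => inf_le_right
  -- π A' ⊔ L = A' ⊔ L
  have hsupL : ∀ A' : Submodule K V, π A' ⊔ L = A' ⊔ L := by
    intro A'
    have h : (A' ⊔ L) ⊓ E ⊔ L = (A' ⊔ L) ⊓ (E ⊔ L) :=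
      inf_sup_assoc_of_le _ le_sup_right
    simp [hπ, h, hsup]
  -- finrank bound: finrank (π A') ≤ finrank A'
  have hfr : ∀ A' : Submodule K V, finrank K (π A') ≤ finrank K A' := by
    intro A'
    have h1 : finrank K ↥(π A' ⊔ L) + finrank K ↥(π A' ⊓ L) =
        finrank K (π A') + finrank K L := Submodule.finrank_sup_add_finrank_inf_eq _ _
    have h2 : (π A' : Submodule K V) ⊓ L = ⊥ := by
      rw [eq_bot_iff, ← hdisj]
      exact inf_le_inf_right _ (hπE A')
    have h3 : finrank K ↥(A' ⊔ L) + finrank K ↥(A' ⊓ L) =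
        finrank K A' + finrank K L := Submodule.finrank_sup_add_finrank_inf_eq _ _
    rw [h2, hsupL, hL] at h1
    simp only [finrank_bot, add_zero] at h1
    rw [hL] at h3
    omega
  have hπmono : ∀ A' B' : Submodule K V, A' ≤ B' → π A' ≤ π B' := by
    intro A' B' h
    exact inf_le_inf_right _ (sup_le_sup_right h _)
  refine ⟨?_, ?_, ?_⟩
  · intro A'
    rw [hr']
    refine ⟨(hR1 _ (hπE A')).1, ((hR1 _ (hπE A')).2.trans ?_)⟩
    exact_mod_cast Int.ofNat_le.mpr (hfr A')
  · intro A' B' h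
    rw [hr', hr']
    exact hR2 _ _ (hπE A') (hπE B') (hπmono _ _ h)
  · intro A' B'
    rw [hr', hr', hr', hr']
    have hsupeq : π (A' ⊔ B') = π A' ⊔ π B' := by
      have haux : ∀ X Y : Submodule K V, (X ⊔ L) ⊔ (Y ⊔ L) = X ⊔ Y ⊔ L := by
        intro X Y; rw [sup_sup_sup_comm, sup_idem]
      have h1 : A' ⊔ B' ⊔ L = (π A' ⊔ π B') ⊔ L := by
        rw [← haux, ← hsupL A', ← hsupL B', haux]
      have h2 : (π A' ⊔ π B' ⊔ L) ⊓ E = π A' ⊔ π B' := by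
        rw [sup_inf_assoc_of_le _ (sup_le (hπE A') (hπE B')), inf_comm L E, hdisj, sup_bot_eq]
      show (A' ⊔ B' ⊔ L) ⊓ E = _
      rw [h1]; exact h2
    have hinfle : π (A' ⊓ B') ≤ π A' ⊓ π B' :=
      le_inf (hπmono _ _ inf_le_left) (hπmono _ _ inf_le_right)
    calc r ((A' ⊔ B' ⊔ L) ⊓ E) + r ((A' ⊓ B' ⊔ L) ⊓ E)
        = r (π A' ⊔ π B') + r (π (A' ⊓ B')) := by rw [← hsupeq]
      _ ≤ r (π A' ⊔ π B') + r (π A' ⊓ π B') := by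
          have := hR2 _ _ (hπE (A' ⊓ B')) (le_trans inf_le_left (hπE A')) hinfle
          omega
      _ ≤ r (π A') + r (π B') := hR3 _ _ (hπE A') (hπE B')
end

section
/- Let $M_1=(E_1,r_1)$ and $M_2=(E_2,r_2)$ be $q$-matroids, and let $M_1', M_2'$ be their loop-extensions to $E = E_1 \oplus E_2$, i.e., $r(M_1';X) = r_1((X+E_2)\cap E_1)$ and $r(M_2';X) = r_2((X+E_1)\cap E_2)$. Then the direct sum $M = M_1' \vee M_2'$ satisfies $r(M; E) = r_1(E_1) + r_2(E_2)$. -/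
open Module Submodule

lemma exists_compl_within {K V : Type*} [Field K] [AddCommGroup V] [Module K V]
    {A E : Submodule K V} (h : A ≤ E) :
    ∃ C : Submodule K V, C ≤ E ∧ A ⊔ C = E ∧ A ⊓ C = ⊥ := by
  obtain ⟨q, hq⟩ := Submodule.exists_isCompl (A.comap E.subtype)
  have hAm : Submodule.map E.subtype (A.comap E.subtype) = A := by
    rw [Submodule.map_comap_subtype, inf_eq_right.mpr h]
  refine ⟨q.map E.subtype, Submodule.map_subtype_le _ _, ?_, ?_⟩
  · rw [← hAm, ← Submodule.map_sup, hq.sup_eq_top,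
      Submodule.map_top, Submodule.range_subtype]
  · rw [← hAm, ← Submodule.map_inf _ (Submodule.injective_subtype E), hq.inf_eq_bot,
      Submodule.map_bot]

lemma rank_diff_le {K V : Type*} [Field K] [AddCommGroup V] [Module K V]
    [FiniteDimensional K V] {E : Submodule K V} (r : Submodule K V → ℤ)
    (h1 : ∀ A ≤ E, 0 ≤ r A ∧ r A ≤ (finrank K A : ℤ))
    (h3 : ∀ A B : Submodule K V, A ≤ E → B ≤ E →
      r (A ⊔ B) + r (A ⊓ B) ≤ r A + r B)
    {A : Submodule K V} (hA : A ≤ E) :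
    r E ≤ r A + (finrank K E : ℤ) - (finrank K A : ℤ) := by
  obtain ⟨C, hCE, hs, hi⟩ := exists_compl_within hA
  have key := h3 A C hA hCE
  rw [hs, hi] at key
  have hC := (h1 C hCE).2
  have hb := (h1 ⊥ bot_le).1
  have hd : finrank K A + finrank K C = finrank K E := by
    have := Submodule.finrank_sup_add_finrank_inf_eq A C
    rw [hs, hi, finrank_bot] at this
    omega
  have hd' : (finrank K A : ℤ) + (finrank K C : ℤ) = (finrank K E : ℤ) := by
    exact_mod_cast hd
  linarith

theorem rank_of_direct_sum
    {K V : Type*} [Field K] [AddCommGroup V] [Module K V] [FiniteDimensional K V]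
    (E1 E2 : Submodule K V) (hdisj : E1 ⊓ E2 = ⊥) (hsup : E1 ⊔ E2 = ⊤)
    (r1 r2 : Submodule K V → ℤ)
    (hR1₁ : ∀ A ≤ E1, 0 ≤ r1 A ∧ r1 A ≤ (finrank K A : ℤ))
    (hR2₁ : ∀ A B : Submodule K V, A ≤ E1 → B ≤ E1 → A ≤ B → r1 A ≤ r1 B)
    (hR3₁ : ∀ A B : Submodule K V, A ≤ E1 → B ≤ E1 →
      r1 (A ⊔ B) + r1 (A ⊓ B) ≤ r1 A + r1 B)
    (hR1₂ : ∀ A ≤ E2, 0 ≤ r2 A ∧ r2 A ≤ (finrank K A : ℤ))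
    (hR2₂ : ∀ A B : Submodule K V, A ≤ E2 → B ≤ E2 → A ≤ B → r2 A ≤ r2 B)
    (hR3₂ : ∀ A B : Submodule K V, A ≤ E2 → B ≤ E2 →
      r2 (A ⊔ B) + r2 (A ⊓ B) ≤ r2 A + r2 B) :
    IsLeast {y : ℤ | ∃ X : Submodule K V,
        y = r1 ((X ⊔ E2) ⊓ E1) + r2 ((X ⊔ E1) ⊓ E2)
          + (finrank K V : ℤ) - (finrank K X : ℤ)}
      (r1 E1 + r2 E2) := by
  constructor
  · exact ⟨⊤, by rw [top_sup_eq, top_inf_eq, top_sup_eq, top_inf_eq, finrank_top]; ring⟩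
  · rintro y ⟨X, rfl⟩
    set A := (X ⊔ E2) ⊓ E1 with hA
    set B := (X ⊔ E1) ⊓ E2 with hB
    have hAle : A ≤ E1 := inf_le_right
    have hBle : B ≤ E2 := inf_le_right
    have h1 := rank_diff_le r1 hR1₁ hR3₁ hAle
    have h2 := rank_diff_le r2 hR1₂ hR3₂ hBle
    -- dimension facts
    have dE : finrank K E1 + finrank K E2 = finrank K V := by
      have := Submodule.finrank_sup_add_finrank_inf_eq E1 E2
      rw [hsup, hdisj, finrank_bot, finrank_top] at this
      omega
    have e1 : finrank K ↥(X ⊔ E2) + finrank K ↥(X ⊓ E2)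
        = finrank K X + finrank K E2 := Submodule.finrank_sup_add_finrank_inf_eq X E2
    have e1' : finrank K ↥(X ⊔ E1) + finrank K ↥(X ⊓ E1)
        = finrank K X + finrank K E1 := Submodule.finrank_sup_add_finrank_inf_eq X E1
    have e2 : finrank K V + finrank K A = finrank K ↥(X ⊔ E2) + finrank K E1 := by
      have := Submodule.finrank_sup_add_finrank_inf_eq (X ⊔ E2) E1
      rw [sup_assoc, sup_comm E2 E1, hsup, sup_top_eq, finrank_top] at this
      exact this
    have e2' : finrank K V + finrank K B = finrank K ↥(X ⊔ E1) + finrank K E2 := by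
      have := Submodule.finrank_sup_add_finrank_inf_eq (X ⊔ E1) E2
      rw [sup_assoc, hsup, sup_top_eq, finrank_top] at this
      exact this
    have e3 : finrank K ↥(X ⊓ E1) + finrank K ↥(X ⊓ E2) ≤ finrank K X := by
      have hle : (X ⊓ E1) ⊔ (X ⊓ E2) ≤ X := sup_le inf_le_left inf_le_left
      have hib : (X ⊓ E1) ⊓ (X ⊓ E2) = ⊥ := by
        rw [← le_bot_iff, ← hdisj]
        exact le_inf (inf_le_of_left_le inf_le_right) (inf_le_of_right_le inf_le_right)
      have := Submodule.finrank_sup_add_finrank_inf_eq (X ⊓ E1) (X ⊓ E2)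
      rw [hib, finrank_bot] at this
      have hm := Submodule.finrank_mono hle
      omega
    have habX : finrank K X ≤ finrank K A + finrank K B := by omega
    have habX' : (finrank K X : ℤ) ≤ (finrank K A : ℤ) + (finrank K B : ℤ) := by
      exact_mod_cast habX
    have dE' : (finrank K E1 : ℤ) + (finrank K E2 : ℤ) = (finrank K V : ℤ) := by
      exact_mod_cast dE
    have c2 : (finrank K V : ℤ) + (finrank K A : ℤ)
        = (finrank K ↥(X ⊔ E2) : ℤ) + (finrank K E1 : ℤ) := by exact_mod_cast e2
    have c2' : (finrank K V : ℤ) + (finrank K B : ℤ)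
        = (finrank K ↥(X ⊔ E1) : ℤ) + (finrank K E2 : ℤ) := by exact_mod_cast e2'
    linarith
end

section
/- Let $M_1=(E_1,r_1)$ and $M_2=(E_2,r_2)$ be $q$-matroids with $E = E_1 \oplus E_2$, and let $M = M_1 \oplus M_2$ be the direct sum defined via matroid union of loop-extensions. Then for any subspace $A = A_1 \oplus A_2$ with $A_1 \subseteq E_1$ and $A_2 \subseteq E_2$, one has $r(M; A) = r_1(A_1) + r_2(A_2)$. -/
open Module Submodule

/-- Relative complement: for `A ≤ B` there is `W ≤ B` with `A ⊓ W = ⊥`, `A ⊔ W = B`. -/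
lemma exists_rel_compl {K V : Type*} [Field K] [AddCommGroup V] [Module K V]
    (A B : Submodule K V) (hAB : A ≤ B) :
    ∃ W : Submodule K V, W ≤ B ∧ A ⊓ W = ⊥ ∧ A ⊔ W = B := by
  obtain ⟨q, hq⟩ := Submodule.exists_isCompl (A.comap B.subtype)
  refine ⟨q.map B.subtype, Submodule.map_subtype_le _ _, ?_, ?_⟩
  · have : A = (A.comap B.subtype).map B.subtype := by
      rw [Submodule.map_comap_eq, Submodule.range_subtype, inf_eq_right.mpr hAB]
    rw [this, ← Submodule.map_inf _ B.injective_subtype, hq.inf_eq_bot,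
      Submodule.map_bot]
  · have : A = (A.comap B.subtype).map B.subtype := by
      rw [Submodule.map_comap_eq, Submodule.range_subtype, inf_eq_right.mpr hAB]
    rw [this, ← Submodule.map_sup, hq.sup_eq_top, Submodule.map_top,
      Submodule.range_subtype]

/-- Unit-increase bound derived from (R1) and (R3). -/
lemma rank_le_of_le {K V : Type*} [Field K] [AddCommGroup V] [Module K V]
    [FiniteDimensional K V]
    (E : Submodule K V) (r : Submodule K V → ℤ)
    (hR1 : ∀ A ≤ E, 0 ≤ r A ∧ r A ≤ (finrank K A : ℤ))
    (hR3 : ∀ A B : Submodule K V, A ≤ E → B ≤ E →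
      r (A ⊔ B) + r (A ⊓ B) ≤ r A + r B)
    (A B : Submodule K V) (hA : A ≤ E) (hB : B ≤ E) (hAB : A ≤ B) :
    r B ≤ r A + ((finrank K B : ℤ) - (finrank K A : ℤ)) := by
  obtain ⟨W, hWB, hinf, hsup⟩ := exists_rel_compl A B hAB
  have hWE : W ≤ E := hWB.trans hB
  have hdim : finrank K A + finrank K W = finrank K B := by
    have := Submodule.finrank_sup_add_finrank_inf_eq A W
    rw [hinf, hsup, finrank_bot, add_zero] at this
    exact this.symm
  have h3 := hR3 A W hA hWE
  rw [hsup, hinf] at h3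
  have h0 : 0 ≤ r ⊥ := (hR1 ⊥ bot_le).1
  have hW : r W ≤ (finrank K W : ℤ) := (hR1 W hWE).2
  have : (finrank K W : ℤ) = (finrank K B : ℤ) - (finrank K A : ℤ) := by
    rw [← hdim]; push_cast; ring
  linarith

theorem direct_sum_rank_on_split_subspaces
    {K V : Type*} [Field K] [AddCommGroup V] [Module K V] [FiniteDimensional K V]
    (E1 E2 : Submodule K V) (hdisj : E1 ⊓ E2 = ⊥) (hsup : E1 ⊔ E2 = ⊤)
    (r1 r2 : Submodule K V → ℤ)
    (hR1₁ : ∀ A ≤ E1, 0 ≤ r1 A ∧ r1 A ≤ (finrank K A : ℤ))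
    (hR2₁ : ∀ A B : Submodule K V, A ≤ E1 → B ≤ E1 → A ≤ B → r1 A ≤ r1 B)
    (hR3₁ : ∀ A B : Submodule K V, A ≤ E1 → B ≤ E1 →
      r1 (A ⊔ B) + r1 (A ⊓ B) ≤ r1 A + r1 B)
    (hR1₂ : ∀ A ≤ E2, 0 ≤ r2 A ∧ r2 A ≤ (finrank K A : ℤ))
    (hR2₂ : ∀ A B : Submodule K V, A ≤ E2 → B ≤ E2 → A ≤ B → r2 A ≤ r2 B)
    (hR3₂ : ∀ A B : Submodule K V, A ≤ E2 → B ≤ E2 →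
      r2 (A ⊔ B) + r2 (A ⊓ B) ≤ r2 A + r2 B)
    (A1 A2 : Submodule K V) (hA1 : A1 ≤ E1) (hA2 : A2 ≤ E2) :
    IsLeast {y : ℤ | ∃ X ≤ A1 ⊔ A2,
        y = r1 ((X ⊔ E2) ⊓ E1) + r2 ((X ⊔ E1) ⊓ E2)
          + (finrank K ↥(A1 ⊔ A2) : ℤ) - (finrank K X : ℤ)}
      (r1 A1 + r2 A2) := by
  -- key simplifications
  have key1 : ((A1 ⊔ A2) ⊔ E2) ⊓ E1 = A1 := by
    rw [sup_assoc, sup_eq_right.mpr hA2, sup_inf_assoc_of_le _ hA1,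
      inf_comm E2 E1, hdisj, sup_bot_eq]
  have key2 : ((A1 ⊔ A2) ⊔ E1) ⊓ E2 = A2 := by
    rw [sup_comm A1 A2, sup_assoc, sup_eq_right.mpr hA1,
      sup_inf_assoc_of_le _ hA2, hdisj, sup_bot_eq]
  have hA12 : A1 ⊓ A2 = ⊥ := by
    rw [← le_bot_iff, ← hdisj]; exact inf_le_inf hA1 hA2
  have hdimA : (finrank K ↥(A1 ⊔ A2) : ℤ) = finrank K A1 + finrank K A2 := by
    have := Submodule.finrank_sup_add_finrank_inf_eq A1 A2
    rw [hA12, finrank_bot, add_zero] at this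
    push_cast [this]; ring
  constructor
  · exact ⟨A1 ⊔ A2, le_rfl, by rw [key1, key2]; ring⟩
  · rintro y ⟨X, hX, rfl⟩
    set X1 := (X ⊔ E2) ⊓ E1 with hX1def
    set X2 := (X ⊔ E1) ⊓ E2 with hX2def
    have hX1A : X1 ≤ A1 := by
      rw [← key1]; exact inf_le_inf_right _ (sup_le_sup_right hX _)
    have hX2A : X2 ≤ A2 := by
      rw [← key2]; exact inf_le_inf_right _ (sup_le_sup_right hX _)
    -- X ≤ X1 ⊔ X2
    have hXle : X ≤ X1 ⊔ X2 := by
      intro x hx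
      have hxT : x ∈ E1 ⊔ E2 := by rw [hsup]; trivial
      obtain ⟨x1, hx1, x2, hx2, hxeq⟩ := Submodule.mem_sup.mp hxT
      have hx1' : x1 ∈ X1 := by
        refine ⟨?_, hx1⟩
        have : x1 = x + (-x2) := by rw [← hxeq]; abel
        rw [this]
        exact Submodule.add_mem _ (Submodule.mem_sup_left hx)
          (Submodule.mem_sup_right (Submodule.neg_mem _ hx2))
      have hx2' : x2 ∈ X2 := by
        refine ⟨?_, hx2⟩
        have : x2 = x + (-x1) := by rw [← hxeq]; abel
        rw [this]
        exact Submodule.add_mem _ (Submodule.mem_sup_left hx)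
          (Submodule.mem_sup_right (Submodule.neg_mem _ hx1))
      have : x = x1 + x2 := hxeq.symm
      rw [this]
      exact Submodule.add_mem _ (Submodule.mem_sup_left hx1')
        (Submodule.mem_sup_right hx2')
    have hdimX : (finrank K X : ℤ) ≤ finrank K X1 + finrank K X2 := by
      have h1 : finrank K X ≤ finrank K ↥(X1 ⊔ X2) :=
        Submodule.finrank_mono hXle
      have h2 := Submodule.finrank_sup_add_finrank_inf_eq X1 X2
      have : finrank K ↥(X1 ⊔ X2) ≤ finrank K X1 + finrank K X2 := by omega
      exact_mod_cast h1.trans this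
    have hb1 : r1 A1 ≤ r1 X1 + ((finrank K A1 : ℤ) - finrank K X1) :=
      rank_le_of_le E1 r1 hR1₁ hR3₁ X1 A1 (hX1A.trans hA1) hA1 hX1A
    have hb2 : r2 A2 ≤ r2 X2 + ((finrank K A2 : ℤ) - finrank K X2) :=
      rank_le_of_le E2 r2 hR1₂ hR3₂ X2 A2 (hX2A.trans hA2) hA2 hX2A
    rw [hdimA]
    linarith
end

section
/- Let $M_1, M_2$ be $q$-matroids on ground spaces $E_1, E_2$ and fix an involutive anti-isomorphism $\perp$ of $\mathcal{L}(E_1 \oplus E_2)$ with $E_1^\perp = E_2$. Then the dual of the direct sum equals the direct sum of the duals: $(M_1 \oplus M_2)^* = M_1^* \oplus M_2^*$, where duality on $E_i$ is via $A^{\perp(E_i)} = A^\perp \cap E_i$. -/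
open Module Submodule

section DualDirectSumAux

set_option linter.unusedSectionVars false

variable {K V : Type*} [Field K] [AddCommGroup V] [Module K V] [FiniteDimensional K V]

private lemma qm_perp_inj (perp : Submodule K V → Submodule K V)
    (hinv : ∀ A, perp (perp A) = A) : Function.Injective perp := fun a b h => by
  rw [← hinv a, ← hinv b, h]

private lemma qm_perp_bot (perp : Submodule K V → Submodule K V)
    (hinv : ∀ A, perp (perp A) = A)
    (hanti : ∀ A B : Submodule K V, A ≤ B → perp B ≤ perp A) :
    perp (⊥ : Submodule K V) = ⊤ := by
  have h : perp (perp ⊤) ≤ perp ⊥ := hanti _ _ bot_le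
  rw [hinv] at h
  exact top_le_iff.mp h

private lemma qm_perp_top (perp : Submodule K V → Submodule K V)
    (hinv : ∀ A, perp (perp A) = A)
    (hanti : ∀ A B : Submodule K V, A ≤ B → perp B ≤ perp A) :
    perp (⊤ : Submodule K V) = ⊥ := by
  have h : perp ⊤ ≤ perp (perp ⊥) := hanti _ _ le_top
  rw [hinv] at h
  exact le_bot_iff.mp h

private lemma qm_perp_sup (perp : Submodule K V → Submodule K V)
    (hinv : ∀ A, perp (perp A) = A)
    (hanti : ∀ A B : Submodule K V, A ≤ B → perp B ≤ perp A)
    (A B : Submodule K V) : perp (A ⊔ B) = perp A ⊓ perp B := by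
  refine le_antisymm (le_inf (hanti _ _ le_sup_left) (hanti _ _ le_sup_right)) ?_
  have h1 : A ≤ perp (perp A ⊓ perp B) := by
    conv_lhs => rw [← hinv A]
    exact hanti _ _ inf_le_left
  have h2 : B ≤ perp (perp A ⊓ perp B) := by
    conv_lhs => rw [← hinv B]
    exact hanti _ _ inf_le_right
  have h := hanti _ _ (sup_le h1 h2)
  rwa [hinv] at h

private lemma qm_perp_inf (perp : Submodule K V → Submodule K V)
    (hinv : ∀ A, perp (perp A) = A)
    (hanti : ∀ A B : Submodule K V, A ≤ B → perp B ≤ perp A)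
    (A B : Submodule K V) : perp (A ⊓ B) = perp A ⊔ perp B := by
  apply qm_perp_inj perp hinv
  rw [hinv, qm_perp_sup perp hinv hanti, hinv, hinv]

private lemma qm_perp_dim_aux (perp : Submodule K V → Submodule K V)
    (hinv : ∀ A, perp (perp A) = A)
    (hanti : ∀ A B : Submodule K V, A ≤ B → perp B ≤ perp A) :
    ∀ (k : ℕ) (A B : Submodule K V), A ≤ B → finrank K B ≤ finrank K A + k →
      finrank K (perp B) + finrank K B ≤ finrank K (perp A) + finrank K A := by
  intro k
  induction k with
  | zero =>
    intro A B hAB hle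
    have : A = B := Submodule.eq_of_le_of_finrank_le hAB (by omega)
    rw [this]
  | succ k ih =>
    intro A B hAB hle
    by_cases hEq : A = B
    · rw [hEq]
    · have hlt : A < B := lt_of_le_of_ne hAB hEq
      obtain ⟨x, hxB, hxA⟩ := SetLike.exists_of_lt hlt
      have hx0 : x ≠ 0 := fun h => hxA (h ▸ A.zero_mem)
      set C := A ⊔ (K ∙ x) with hC
      have hAC : A ≤ C := le_sup_left
      have hxC : x ∈ C := Submodule.mem_sup_right (Submodule.mem_span_singleton_self x)
      have hCB : C ≤ B := sup_le hAB ((Submodule.span_singleton_le_iff_mem x B).mpr hxB)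
      have hANeC : A ≠ C := fun h => hxA (h ▸ hxC)
      have hACfr : finrank K A < finrank K C :=
        Submodule.finrank_lt_finrank_of_lt (lt_of_le_of_ne hAC hANeC)
      have hdC : finrank K C ≤ finrank K A + 1 := by
        have e := Submodule.finrank_sup_add_finrank_inf_eq A (K ∙ x)
        have hs : finrank K (K ∙ x) = 1 := finrank_span_singleton hx0
        rw [← hC] at e
        omega
      have h1 : finrank K (perp B) + finrank K B ≤ finrank K (perp C) + finrank K C :=
        ih C B hCB (by omega)
      have hpCA : perp C < perp A :=
        lt_of_le_of_ne (hanti _ _ hAC) fun h => hANeC (qm_perp_inj perp hinv h).symm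
      have h3 : finrank K (perp C) < finrank K (perp A) :=
        Submodule.finrank_lt_finrank_of_lt hpCA
      omega

private lemma qm_perp_dim (perp : Submodule K V → Submodule K V)
    (hinv : ∀ A, perp (perp A) = A)
    (hanti : ∀ A B : Submodule K V, A ≤ B → perp B ≤ perp A)
    (W : Submodule K V) : finrank K (perp W) + finrank K W = finrank K V := by
  have h1 := qm_perp_dim_aux perp hinv hanti (finrank K V) ⊥ W bot_le
    (by have := Submodule.finrank_le W; simpa using this)
  have h2 := qm_perp_dim_aux perp hinv hanti (finrank K V) W ⊤ le_top
    (by have := Submodule.finrank_le W; rw [finrank_top]; omega)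
  rw [qm_perp_bot perp hinv hanti, finrank_top, finrank_bot] at h1
  rw [qm_perp_top perp hinv hanti, finrank_top, finrank_bot] at h2
  omega

private lemma qm_exists_compl_le {A B : Submodule K V} (h : A ≤ B) :
    ∃ W : Submodule K V, W ≤ B ∧ A ⊔ W = B ∧ A ⊓ W = ⊥ := by
  obtain ⟨q, hq⟩ := Submodule.exists_isCompl (A.comap B.subtype)
  have hA : (A.comap B.subtype).map B.subtype = A := by
    rw [Submodule.map_comap_subtype]
    exact inf_eq_right.mpr h
  refine ⟨q.map B.subtype, Submodule.map_subtype_le _ _, ?_, ?_⟩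
  · rw [← hA, ← Submodule.map_sup, hq.sup_eq_top, Submodule.map_top, Submodule.range_subtype]
  · rw [← hA, ← Submodule.map_inf _ (Submodule.injective_subtype B), hq.inf_eq_bot,
      Submodule.map_bot]

private lemma qm_unit_incr (E : Submodule K V) (rr : Submodule K V → ℤ)
    (hR1 : ∀ A ≤ E, 0 ≤ rr A ∧ rr A ≤ (finrank K A : ℤ))
    (hR3 : ∀ A B : Submodule K V, A ≤ E → B ≤ E → rr (A ⊔ B) + rr (A ⊓ B) ≤ rr A + rr B)
    {A B : Submodule K V} (hAB : A ≤ B) (hBE : B ≤ E) :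
    rr B ≤ rr A + (finrank K B : ℤ) - finrank K A := by
  obtain ⟨W, hWB, hsup', hinf'⟩ := qm_exists_compl_le hAB
  have h3 := hR3 A W (hAB.trans hBE) (hWB.trans hBE)
  rw [hsup', hinf'] at h3
  have h0 := (hR1 ⊥ bot_le).1
  have hW := (hR1 W (hWB.trans hBE)).2
  have hd : finrank K B + finrank K (⊥ : Submodule K V) = finrank K A + finrank K W := by
    rw [← hsup', ← hinf']
    exact Submodule.finrank_sup_add_finrank_inf_eq A W
  rw [finrank_bot] at hd
  have hd' : (finrank K B : ℤ) = finrank K A + finrank K W := by exact_mod_cast hd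
  linarith

private lemma qm_le_pi_sup (E1 E2 : Submodule K V) (hsup : E1 ⊔ E2 = ⊤)
    (X : Submodule K V) : X ≤ ((X ⊔ E2) ⊓ E1) ⊔ ((X ⊔ E1) ⊓ E2) := by
  intro x hx
  have hxT : x ∈ E1 ⊔ E2 := by rw [hsup]; trivial
  obtain ⟨y, hy, z, hz, hyz⟩ := Submodule.mem_sup.mp hxT
  have hy' : y ∈ (X ⊔ E2) ⊓ E1 := by
    refine ⟨Submodule.mem_sup.mpr ⟨x, hx, -z, E2.neg_mem hz, ?_⟩, hy⟩
    rw [← hyz]; abel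
  have hz' : z ∈ (X ⊔ E1) ⊓ E2 := by
    refine ⟨Submodule.mem_sup.mpr ⟨x, hx, -y, E1.neg_mem hy, ?_⟩, hz⟩
    rw [← hyz]; abel
  exact Submodule.mem_sup.mpr ⟨y, hy', z, hz', hyz⟩

end DualDirectSumAux

theorem dual_of_direct_sum
    {K V : Type*} [Field K] [AddCommGroup V] [Module K V] [FiniteDimensional K V]
    (E1 E2 : Submodule K V) (hdisj : E1 ⊓ E2 = ⊥) (hsup : E1 ⊔ E2 = ⊤)
    -- the involutive anti-isomorphism ⊥ of the subspace lattice of E = E1 ⊕ E2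
    (perp : Submodule K V → Submodule K V)
    (hperp_inv : ∀ A : Submodule K V, perp (perp A) = A)
    (hperp_anti : ∀ A B : Submodule K V, A ≤ B → perp B ≤ perp A)
    (hperpE1 : perp E1 = E2)
    -- the q-matroids M1 on E1 and M2 on E2
    (r1 r2 : Submodule K V → ℤ)
    (hR1₁ : ∀ A ≤ E1, 0 ≤ r1 A ∧ r1 A ≤ (finrank K A : ℤ))
    (hR2₁ : ∀ A B : Submodule K V, A ≤ E1 → B ≤ E1 → A ≤ B → r1 A ≤ r1 B)
    (hR3₁ : ∀ A B : Submodule K V, A ≤ E1 → B ≤ E1 →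
      r1 (A ⊔ B) + r1 (A ⊓ B) ≤ r1 A + r1 B)
    (hR1₂ : ∀ A ≤ E2, 0 ≤ r2 A ∧ r2 A ≤ (finrank K A : ℤ))
    (hR2₂ : ∀ A B : Submodule K V, A ≤ E2 → B ≤ E2 → A ≤ B → r2 A ≤ r2 B)
    (hR3₂ : ∀ A B : Submodule K V, A ≤ E2 → B ≤ E2 →
      r2 (A ⊔ B) + r2 (A ⊓ B) ≤ r2 A + r2 B)
    -- r = rank function of M1 ⊕ M2, the union of the loop-extensions of M1 and M2
    (r : Submodule K V → ℤ)
    (hr : ∀ A : Submodule K V, IsLeast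
      {y : ℤ | ∃ X ≤ A,
        y = r1 ((X ⊔ E2) ⊓ E1) + r2 ((X ⊔ E1) ⊓ E2)
          + (finrank K A : ℤ) - (finrank K X : ℤ)} (r A))
    -- rd = rank function of M1* ⊕ M2*, where duality on Eᵢ is A ↦ perp A ⊓ Eᵢ
    (rd : Submodule K V → ℤ)
    (hrd : ∀ A : Submodule K V, IsLeast
      {y : ℤ | ∃ X ≤ A,
        y = ((finrank K ↥((X ⊔ E2) ⊓ E1) : ℤ) - r1 E1
              + r1 (perp ((X ⊔ E2) ⊓ E1) ⊓ E1))
          + ((finrank K ↥((X ⊔ E1) ⊓ E2) : ℤ) - r2 E2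
              + r2 (perp ((X ⊔ E1) ⊓ E2) ⊓ E2))
          + (finrank K A : ℤ) - (finrank K X : ℤ)} (rd A)) :
    -- (M1 ⊕ M2)* = M1* ⊕ M2*
    ∀ A : Submodule K V, (finrank K A : ℤ) - r ⊤ + r (perp A) = rd A := by
  -- basic perp facts
  have hperpE2 : perp E2 = E1 := by rw [← hperpE1, hperp_inv]
  have psup : ∀ X Y : Submodule K V, perp (X ⊔ Y) = perp X ⊓ perp Y :=
    qm_perp_sup perp hperp_inv hperp_anti
  have pinf : ∀ X Y : Submodule K V, perp (X ⊓ Y) = perp X ⊔ perp Y :=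
    qm_perp_inf perp hperp_inv hperp_anti
  have pdim : ∀ W : Submodule K V, finrank K (perp W) + finrank K W = finrank K V :=
    qm_perp_dim perp hperp_inv hperp_anti
  have hE : finrank K E1 + finrank K E2 = finrank K V := by
    have h := Submodule.finrank_sup_add_finrank_inf_eq E1 E2
    rw [hsup, hdisj, finrank_top, finrank_bot] at h
    omega
  have hEdisj : E2 ⊓ E1 = ⊥ := by rw [inf_comm]; exact hdisj
  -- dimensions of the lattice projections
  have dim_pi1 : ∀ X : Submodule K V,
      finrank K ↥((X ⊔ E2) ⊓ E1) + finrank K ↥(X ⊓ E2) = finrank K X := by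
    intro X
    have e1 := Submodule.finrank_sup_add_finrank_inf_eq (X ⊔ E2) E1
    have e2 := Submodule.finrank_sup_add_finrank_inf_eq X E2
    have e3 : (X ⊔ E2) ⊔ E1 = ⊤ := by rw [sup_assoc, sup_comm E2 E1, hsup, sup_top_eq]
    rw [e3, finrank_top] at e1
    have h1 := Submodule.finrank_le X
    have h2 := Submodule.finrank_le (X ⊓ E2)
    omega
  have dim_pi2 : ∀ X : Submodule K V,
      finrank K ↥((X ⊔ E1) ⊓ E2) + finrank K ↥(X ⊓ E1) = finrank K X := by
    intro X
    have e1 := Submodule.finrank_sup_add_finrank_inf_eq (X ⊔ E1) E2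
    have e2 := Submodule.finrank_sup_add_finrank_inf_eq X E1
    have e3 : (X ⊔ E1) ⊔ E2 = ⊤ := by rw [sup_assoc, hsup, sup_top_eq]
    rw [e3, finrank_top] at e1
    have h1 := Submodule.finrank_le X
    have h2 := Submodule.finrank_le (X ⊓ E1)
    omega
  -- modular law consequences
  have modE1 : ∀ W : Submodule K V, W ≤ E1 → (W ⊔ E2) ⊓ E1 = W := by
    intro W hW
    rw [sup_inf_assoc_of_le _ hW, hEdisj, sup_bot_eq]
  have modE2 : ∀ W : Submodule K V, W ≤ E2 → (W ⊔ E1) ⊓ E2 = W := by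
    intro W hW
    rw [sup_inf_assoc_of_le _ hW, hdisj, sup_bot_eq]
  -- key identities for the dual rank functions
  have pi1_perp : ∀ X : Submodule K V,
      perp ((X ⊔ E2) ⊓ E1) ⊓ E1 = perp X ⊓ E1 := by
    intro X
    have h : perp ((X ⊔ E2) ⊓ E1) = (perp X ⊓ E1) ⊔ E2 := by
      rw [pinf, psup, hperpE1, hperpE2]
    rw [h]
    exact modE1 _ inf_le_right
  have pi2_perp : ∀ X : Submodule K V,
      perp ((X ⊔ E1) ⊓ E2) ⊓ E2 = perp X ⊓ E2 := by
    intro X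
    have h : perp ((X ⊔ E1) ⊓ E2) = (perp X ⊓ E2) ⊔ E1 := by
      rw [pinf, psup, hperpE1, hperpE2]
    rw [h]
    exact modE2 _ inf_le_right
  -- unit increase
  have incr1 : ∀ P Q : Submodule K V, P ≤ Q → Q ≤ E1 →
      r1 Q ≤ r1 P + (finrank K Q : ℤ) - finrank K P :=
    fun P Q h1 h2 => qm_unit_incr E1 r1 hR1₁ hR3₁ h1 h2
  have incr2 : ∀ P Q : Submodule K V, P ≤ Q → Q ≤ E2 →
      r2 Q ≤ r2 P + (finrank K Q : ℤ) - finrank K P :=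
    fun P Q h1 h2 => qm_unit_incr E2 r2 hR1₂ hR3₂ h1 h2
  -- rank of the ground space
  have hrtop : r ⊤ = r1 E1 + r2 E2 := by
    have hub : r ⊤ ≤ r1 E1 + r2 E2 := by
      refine (hr ⊤).2 ⟨⊤, le_rfl, ?_⟩
      rw [top_sup_eq, top_inf_eq, top_sup_eq, top_inf_eq]
      ring
    have hlb : r1 E1 + r2 E2 ≤ r ⊤ := by
      obtain ⟨X, hX, hval⟩ := (hr ⊤).1
      have a1 := incr1 ((X ⊔ E2) ⊓ E1) E1 inf_le_right le_rfl
      have a2 := incr2 ((X ⊔ E1) ⊓ E2) E2 inf_le_right le_rfl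
      have d1 := dim_pi1 X
      have d2 := dim_pi2 X
      have hXc : finrank K ↥(X ⊓ E1) + finrank K ↥(X ⊓ E2) ≤ finrank K X := by
        have e := Submodule.finrank_sup_add_finrank_inf_eq (X ⊓ E1) (X ⊓ E2)
        have hz : (X ⊓ E1) ⊓ (X ⊓ E2) = ⊥ :=
          le_bot_iff.mp (le_trans (inf_le_inf inf_le_right inf_le_right) hdisj.le)
        have hm : finrank K ↥((X ⊓ E1) ⊔ (X ⊓ E2)) ≤ finrank K X :=
          Submodule.finrank_mono (sup_le inf_le_left inf_le_left)
        rw [hz, finrank_bot] at e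
        omega
      rw [hval, finrank_top]
      have d1' : (finrank K ↥((X ⊔ E2) ⊓ E1) : ℤ) + finrank K ↥(X ⊓ E2) = finrank K X := by
        exact_mod_cast d1
      have d2' : (finrank K ↥((X ⊔ E1) ⊓ E2) : ℤ) + finrank K ↥(X ⊓ E1) = finrank K X := by
        exact_mod_cast d2
      have hXc' : (finrank K ↥(X ⊓ E1) : ℤ) + finrank K ↥(X ⊓ E2) ≤ finrank K X := by
        exact_mod_cast hXc
      have hE' : (finrank K E1 : ℤ) + finrank K E2 = finrank K V := by exact_mod_cast hE
      linarith
    exact le_antisymm hub hlb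
  intro A
  refine le_antisymm ?_ ?_
  · -- LHS ≤ rd A
    obtain ⟨X, hXA, hrdval⟩ := (hrd A).1
    rw [pi1_perp X, pi2_perp X] at hrdval
    set P1 := perp X ⊓ E1 with hP1
    set P2 := perp X ⊓ E2 with hP2
    set Y := (P1 ⊔ P2) ⊓ perp A with hY
    have hYB : Y ≤ perp A := inf_le_right
    have hrB : r (perp A) ≤ r1 ((Y ⊔ E2) ⊓ E1) + r2 ((Y ⊔ E1) ⊓ E2)
        + (finrank K (perp A) : ℤ) - finrank K Y := (hr (perp A)).2 ⟨Y, hYB, rfl⟩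
    have hYP1 : Y ≤ P1 ⊔ E2 :=
      le_trans inf_le_left (sup_le le_sup_left (le_trans inf_le_right le_sup_right))
    have hπ1Y : (Y ⊔ E2) ⊓ E1 ≤ P1 := by
      calc (Y ⊔ E2) ⊓ E1 ≤ (P1 ⊔ E2) ⊓ E1 :=
            inf_le_inf_right _ (sup_le hYP1 le_sup_right)
        _ = P1 := modE1 P1 inf_le_right
    have hYP2 : Y ≤ P2 ⊔ E1 :=
      le_trans inf_le_left (sup_le (le_trans inf_le_right le_sup_right) le_sup_left)
    have hπ2Y : (Y ⊔ E1) ⊓ E2 ≤ P2 := by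
      calc (Y ⊔ E1) ⊓ E2 ≤ (P2 ⊔ E1) ⊓ E2 :=
            inf_le_inf_right _ (sup_le hYP2 le_sup_right)
        _ = P2 := modE2 P2 inf_le_right
    have hr1m : r1 ((Y ⊔ E2) ⊓ E1) ≤ r1 P1 :=
      hR2₁ _ _ inf_le_right inf_le_right hπ1Y
    have hr2m : r2 ((Y ⊔ E1) ⊓ E2) ≤ r2 P2 :=
      hR2₂ _ _ inf_le_right inf_le_right hπ2Y
    -- dimension bookkeeping
    have hdP1 : finrank K P1 + finrank K ↥(X ⊔ E2) = finrank K V := by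
      have h : P1 = perp (X ⊔ E2) := by rw [psup, hperpE2]
      rw [h]; exact pdim _
    have hdP2 : finrank K P2 + finrank K ↥(X ⊔ E1) = finrank K V := by
      have h : P2 = perp (X ⊔ E1) := by rw [psup, hperpE1]
      rw [h]; exact pdim _
    have e1 := Submodule.finrank_sup_add_finrank_inf_eq X E1
    have e2 := Submodule.finrank_sup_add_finrank_inf_eq X E2
    have hP12 : P1 ⊓ P2 = ⊥ :=
      le_bot_iff.mp (le_trans (inf_le_inf inf_le_right inf_le_right) hdisj.le)
    have eP := Submodule.finrank_sup_add_finrank_inf_eq P1 P2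
    rw [hP12, finrank_bot] at eP
    have eY := Submodule.finrank_sup_add_finrank_inf_eq (P1 ⊔ P2) (perp A)
    have hZle : P1 ⊔ P2 ⊔ perp A ≤ perp X :=
      sup_le (sup_le inf_le_left inf_le_left) (hperp_anti _ _ hXA)
    have hZd : finrank K ↥(P1 ⊔ P2 ⊔ perp A) ≤ finrank K (perp X) :=
      Submodule.finrank_mono hZle
    have hdpX := pdim X
    have hdpA := pdim A
    have d1 := dim_pi1 X
    have d2 := dim_pi2 X
    rw [hrdval, hrtop]
    -- cast everything to ℤ
    have hdP1' : (finrank K P1 : ℤ) + finrank K ↥(X ⊔ E2) = finrank K V := by exact_mod_cast hdP1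
    have hdP2' : (finrank K P2 : ℤ) + finrank K ↥(X ⊔ E1) = finrank K V := by exact_mod_cast hdP2
    have e1' : (finrank K ↥(X ⊔ E1) : ℤ) + finrank K ↥(X ⊓ E1)
        = finrank K X + finrank K E1 := by exact_mod_cast e1
    have e2' : (finrank K ↥(X ⊔ E2) : ℤ) + finrank K ↥(X ⊓ E2)
        = finrank K X + finrank K E2 := by exact_mod_cast e2
    have eP' : (finrank K ↥(P1 ⊔ P2) : ℤ) = finrank K P1 + finrank K P2 := by exact_mod_cast eP
    have eY' : (finrank K ↥(P1 ⊔ P2 ⊔ perp A) : ℤ) + finrank K Y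
        = finrank K ↥(P1 ⊔ P2) + finrank K (perp A) := by exact_mod_cast eY
    have hZd' : (finrank K ↥(P1 ⊔ P2 ⊔ perp A) : ℤ) ≤ finrank K (perp X) := by exact_mod_cast hZd
    have hdpX' : (finrank K (perp X) : ℤ) + finrank K X = finrank K V := by exact_mod_cast hdpX
    have hdpA' : (finrank K (perp A) : ℤ) + finrank K A = finrank K V := by exact_mod_cast hdpA
    have d1' : (finrank K ↥((X ⊔ E2) ⊓ E1) : ℤ) + finrank K ↥(X ⊓ E2) = finrank K X := by
      exact_mod_cast d1
    have d2' : (finrank K ↥((X ⊔ E1) ⊓ E2) : ℤ) + finrank K ↥(X ⊓ E1) = finrank K X := by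
      exact_mod_cast d2
    have hE' : (finrank K E1 : ℤ) + finrank K E2 = finrank K V := by exact_mod_cast hE
    linarith
  · -- rd A ≤ LHS
    obtain ⟨Y, hYB, hrval⟩ := (hr (perp A)).1
    set Q1 := (Y ⊔ E2) ⊓ E1 with hQ1
    set Q2 := (Y ⊔ E1) ⊓ E2 with hQ2
    set Z := perp A ⊔ Q1 ⊔ Q2 with hZ
    set X := perp Z with hX
    have hXA : X ≤ A := by
      have h := hperp_anti _ _ (le_trans le_sup_left (le_sup_left : perp A ⊔ Q1 ≤ Z))
      rwa [hperp_inv] at h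
    have hrdle : rd A ≤ ((finrank K ↥((X ⊔ E2) ⊓ E1) : ℤ) - r1 E1
          + r1 (perp ((X ⊔ E2) ⊓ E1) ⊓ E1))
        + ((finrank K ↥((X ⊔ E1) ⊓ E2) : ℤ) - r2 E2
          + r2 (perp ((X ⊔ E1) ⊓ E2) ⊓ E2))
        + (finrank K A : ℤ) - finrank K X := (hrd A).2 ⟨X, hXA, rfl⟩
    have hpX : perp X = Z := hperp_inv Z
    rw [pi1_perp X, pi2_perp X, hpX] at hrdle
    have hQ1Z : Q1 ≤ Z ⊓ E1 :=
      le_inf (le_trans le_sup_right (le_sup_left : perp A ⊔ Q1 ≤ Z)) inf_le_right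
    have hQ2Z : Q2 ≤ Z ⊓ E2 := le_inf le_sup_right inf_le_right
    have hi1 : r1 (Z ⊓ E1) ≤ r1 Q1 + (finrank K ↥(Z ⊓ E1) : ℤ) - finrank K Q1 :=
      incr1 Q1 (Z ⊓ E1) hQ1Z inf_le_right
    have hi2 : r2 (Z ⊓ E2) ≤ r2 Q2 + (finrank K ↥(Z ⊓ E2) : ℤ) - finrank K Q2 :=
      incr2 Q2 (Z ⊓ E2) hQ2Z inf_le_right
    -- dimension bookkeeping
    have hdX := pdim Z
    have hdpA := pdim A
    have hXE2 : finrank K ↥(X ⊓ E2) + finrank K ↥(Z ⊔ E1) = finrank K V := by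
      have h : X ⊓ E2 = perp (Z ⊔ E1) := by rw [psup, hperpE1, hX]
      rw [h]; exact pdim _
    have hXE1 : finrank K ↥(X ⊓ E1) + finrank K ↥(Z ⊔ E2) = finrank K V := by
      have h : X ⊓ E1 = perp (Z ⊔ E2) := by rw [psup, hperpE2, hX]
      rw [h]; exact pdim _
    have eZ1 := Submodule.finrank_sup_add_finrank_inf_eq Z E1
    have eZ2 := Submodule.finrank_sup_add_finrank_inf_eq Z E2
    have d1 := dim_pi1 X
    have d2 := dim_pi2 X
    have hQ12 : Q1 ⊓ Q2 = ⊥ :=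
      le_bot_iff.mp (le_trans (inf_le_inf inf_le_right inf_le_right) hdisj.le)
    have eQ := Submodule.finrank_sup_add_finrank_inf_eq Q1 Q2
    rw [hQ12, finrank_bot] at eQ
    have hZeq : Z = perp A ⊔ (Q1 ⊔ Q2) := by rw [hZ, sup_assoc]
    have eZ := Submodule.finrank_sup_add_finrank_inf_eq (perp A) (Q1 ⊔ Q2)
    rw [← hZeq] at eZ
    have hYQ : Y ≤ perp A ⊓ (Q1 ⊔ Q2) :=
      le_inf hYB (qm_le_pi_sup E1 E2 hsup Y)
    have hdY : finrank K Y ≤ finrank K ↥(perp A ⊓ (Q1 ⊔ Q2)) :=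
      Submodule.finrank_mono hYQ
    rw [hrtop, hrval]
    -- cast everything to ℤ
    have hdX' : (finrank K X : ℤ) + finrank K Z = finrank K V := by exact_mod_cast hdX
    have hdpA' : (finrank K (perp A) : ℤ) + finrank K A = finrank K V := by exact_mod_cast hdpA
    have hXE2' : (finrank K ↥(X ⊓ E2) : ℤ) + finrank K ↥(Z ⊔ E1) = finrank K V := by
      exact_mod_cast hXE2
    have hXE1' : (finrank K ↥(X ⊓ E1) : ℤ) + finrank K ↥(Z ⊔ E2) = finrank K V := by
      exact_mod_cast hXE1
    have eZ1' : (finrank K ↥(Z ⊔ E1) : ℤ) + finrank K ↥(Z ⊓ E1)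
        = finrank K Z + finrank K E1 := by exact_mod_cast eZ1
    have eZ2' : (finrank K ↥(Z ⊔ E2) : ℤ) + finrank K ↥(Z ⊓ E2)
        = finrank K Z + finrank K E2 := by exact_mod_cast eZ2
    have d1' : (finrank K ↥((X ⊔ E2) ⊓ E1) : ℤ) + finrank K ↥(X ⊓ E2) = finrank K X := by
      exact_mod_cast d1
    have d2' : (finrank K ↥((X ⊔ E1) ⊓ E2) : ℤ) + finrank K ↥(X ⊓ E1) = finrank K X := by
      exact_mod_cast d2
    have eQ' : (finrank K ↥(Q1 ⊔ Q2) : ℤ) = finrank K Q1 + finrank K Q2 := by exact_mod_cast eQ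
    have eZ' : (finrank K Z : ℤ) + finrank K ↥(perp A ⊓ (Q1 ⊔ Q2))
        = finrank K (perp A) + finrank K ↥(Q1 ⊔ Q2) := by exact_mod_cast eZ
    have hdY' : (finrank K Y : ℤ) ≤ finrank K ↥(perp A ⊓ (Q1 ⊔ Q2)) := by exact_mod_cast hdY
    have hE' : (finrank K E1 : ℤ) + finrank K E2 = finrank K V := by exact_mod_cast hE
    linarith
end

section
/- Let $M_1, M_2$ be $q$-matroids on the same ground space $E$ with a fixed involutive anti-isomorphism $\perp$. Define the matroid intersection $M_1 \wedge M_2 := (M_1^* \vee M_2^*)^*$. Then for any subspace $T \subseteq E$: $(M_1 \vee M_2)|_T = M_1|_T \vee M_2|_T$, and $(M_1 \wedge M_2)/T \cong (M_1/T) \wedge (M_2/T)$. -/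
open Module Submodule

section Aux
variable {K V : Type*} [Field K] [AddCommGroup V] [Module K V] [FiniteDimensional K V]

lemma qaux_f_bot (f : Submodule K V → Submodule K V)
    (hinv : ∀ A, f (f A) = A) (hanti : ∀ A B, A ≤ B → f B ≤ f A) : f ⊥ = ⊤ := by
  have h := hanti ⊥ (f ⊤) bot_le
  rw [hinv] at h
  exact le_antisymm le_top h

lemma qaux_f_lt (f : Submodule K V → Submodule K V)
    (hinv : ∀ A, f (f A) = A) (hanti : ∀ A B, A ≤ B → f B ≤ f A)
    {A B : Submodule K V} (h : A < B) : f B < f A := by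
  refine lt_of_le_of_ne (hanti _ _ h.le) fun he => h.ne ?_
  have := congrArg f he
  rw [hinv, hinv] at this; exact this.symm

lemma qaux_exists_lt (A : Submodule K V) {k : ℕ} (hk : k + 1 ≤ finrank K A) :
    ∃ A' : Submodule K V, A' < A ∧ k ≤ finrank K A' := by
  haveI : Nontrivial A := Module.nontrivial_of_finrank_pos (R := K) (by omega)
  obtain ⟨x, hx⟩ := exists_ne (0 : A)
  obtain ⟨W, hW⟩ := Submodule.exists_isCompl (K ∙ x)
  have h1 : finrank K (K ∙ x) + finrank K W = finrank K A :=
    Submodule.finrank_add_eq_of_isCompl hW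
  rw [finrank_span_singleton hx] at h1
  have h2 : finrank K (W.map A.subtype) = finrank K W :=
    (Submodule.equivSubtypeMap A W).symm.finrank_eq
  refine ⟨W.map A.subtype, lt_of_le_of_ne (Submodule.map_subtype_le A W) fun he => ?_, by omega⟩
  have h3 : finrank K (W.map A.subtype) = finrank K A := by rw [he]
  omega

lemma qaux_finrank_f (f : Submodule K V → Submodule K V)
    (hinv : ∀ A, f (f A) = A) (hanti : ∀ A B, A ≤ B → f B ≤ f A)
    (A : Submodule K V) : finrank K (f A) + finrank K A = finrank K V := by
  have hle : ∀ (k : ℕ) (A : Submodule K V), k ≤ finrank K A →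
      finrank K (f A) + k ≤ finrank K V := by
    intro k
    induction k with
    | zero => intro A _; simpa using (f A).finrank_le
    | succ k ih =>
      intro A hk
      obtain ⟨A', hA', hkA'⟩ := qaux_exists_lt A hk
      have h1 := Submodule.finrank_lt_finrank_of_lt (qaux_f_lt f hinv hanti hA')
      have h2 := ih A' hkA'
      omega
  have hge : ∀ (k : ℕ) (A : Submodule K V), finrank K A + k ≤ finrank K V →
      k ≤ finrank K (f A) := by
    intro k
    induction k with
    | zero => intro A _; omega
    | succ k ih =>
      intro A hk
      have hlt : finrank K A < finrank K (⊤ : Submodule K V) := by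
        rw [finrank_top]; omega
      obtain ⟨m, hm⟩ := Submodule.exists_of_finrank_lt A (by
        rw [finrank_top] at hlt
        exact lt_of_lt_of_le hlt (le_of_eq rfl))
      have hmA : m ∉ A := by simpa using hm 1 one_ne_zero
      have hm0 : m ≠ 0 := fun h => hmA (h ▸ A.zero_mem)
      set A'' := A ⊔ (K ∙ m) with hA''
      have hlt2 : A < A'' := lt_of_le_of_ne le_sup_left (fun he => hmA
        (he ▸ le_sup_right (a := A) (Submodule.mem_span_singleton_self m)))
      have hsup : finrank K A'' + finrank K (A ⊓ (K ∙ m) : Submodule K V)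
          = finrank K A + finrank K (K ∙ m) :=
        Submodule.finrank_sup_add_finrank_inf_eq A (K ∙ m)
      rw [finrank_span_singleton hm0] at hsup
      have hlt3 := Submodule.finrank_lt_finrank_of_lt hlt2
      have hA''r : finrank K A'' = finrank K A + 1 := by omega
      have := ih A'' (by omega)
      have h4 := Submodule.finrank_lt_finrank_of_lt (qaux_f_lt f hinv hanti hlt2)
      omega
  have h1 := hle (finrank K A) A le_rfl
  have h2 := hge (finrank K V - finrank K A) A (by have := A.finrank_le; omega)
  have := A.finrank_le
  omega

lemma qaux_le_comap (T : Submodule K V) (B : Submodule K (V ⧸ T)) :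
    T ≤ comap T.mkQ B := fun x hx => by
  show T.mkQ x ∈ B
  have hz : T.mkQ x = 0 := by simpa using (Submodule.Quotient.mk_eq_zero T).mpr hx
  rw [hz]; exact B.zero_mem

lemma qaux_finrank_comap_mkQ (T : Submodule K V) (B : Submodule K (V ⧸ T)) :
    finrank K (comap T.mkQ B) = finrank K B + finrank K T := by
  set W := comap T.mkQ B with hW
  have hTW : T ≤ W := fun x hx => by
    show T.mkQ x ∈ B
    have hz : T.mkQ x = 0 := by
      simpa using (Submodule.Quotient.mk_eq_zero T).mpr hx
    rw [hz]; exact B.zero_mem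
  have hrange : LinearMap.range (T.mkQ.domRestrict W) = B := by
    rw [LinearMap.range_domRestrict, hW, Submodule.map_comap_eq_of_surjective T.mkQ_surjective]
  have hker : LinearMap.ker (T.mkQ.domRestrict W) = comap W.subtype T := by
    rw [LinearMap.ker_domRestrict, Submodule.ker_mkQ]
  have h1 := LinearMap.finrank_range_add_finrank_ker (T.mkQ.domRestrict W)
  rw [hrange, hker] at h1
  have h2 : finrank K (comap W.subtype T) = finrank K T :=
    (Submodule.comapSubtypeEquivOfLe hTW).finrank_eq
  omega

end Aux

theorem union_restriction_and_intersection_contraction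
    {K V : Type*} [Field K] [AddCommGroup V] [Module K V] [FiniteDimensional K V]
    (T : Submodule K V)
    -- involutive anti-isomorphism on L(E)
    (perp : Submodule K V → Submodule K V)
    (hperp_inv : ∀ A : Submodule K V, perp (perp A) = A)
    (hperp_anti : ∀ A B : Submodule K V, A ≤ B → perp B ≤ perp A)
    -- involutive anti-isomorphism on L(E/T)
    (perpQ : Submodule K (V ⧸ T) → Submodule K (V ⧸ T))
    (hperpQ_inv : ∀ B : Submodule K (V ⧸ T), perpQ (perpQ B) = B)
    (hperpQ_anti : ∀ B C : Submodule K (V ⧸ T), B ≤ C → perpQ C ≤ perpQ B)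
    -- two q-matroids on E
    (r1 r2 : Submodule K V → ℤ)
    (hR1₁ : ∀ A : Submodule K V, 0 ≤ r1 A ∧ r1 A ≤ (finrank K A : ℤ))
    (hR2₁ : ∀ A B : Submodule K V, A ≤ B → r1 A ≤ r1 B)
    (hR3₁ : ∀ A B : Submodule K V, r1 (A ⊔ B) + r1 (A ⊓ B) ≤ r1 A + r1 B)
    (hR1₂ : ∀ A : Submodule K V, 0 ≤ r2 A ∧ r2 A ≤ (finrank K A : ℤ))
    (hR2₂ : ∀ A B : Submodule K V, A ≤ B → r2 A ≤ r2 B)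
    (hR3₂ : ∀ A B : Submodule K V, r2 (A ⊔ B) + r2 (A ⊓ B) ≤ r2 A + r2 B)
    -- u = rank of the matroid union M1 ∨ M2
    (u : Submodule K V → ℤ)
    (hu : ∀ A : Submodule K V, IsLeast
      {y : ℤ | ∃ X ≤ A, y = r1 X + r2 X + (finrank K A : ℤ) - (finrank K X : ℤ)} (u A))
    -- ud = rank of the union of the duals M1* ∨ M2*;
    -- so M1 ∧ M2 = (M1* ∨ M2*)* has rank w A = dim A - ud ⊤ + ud (perp A)
    (ud : Submodule K V → ℤ)
    (hud : ∀ A : Submodule K V, IsLeast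
      {y : ℤ | ∃ X ≤ A,
        y = ((finrank K X : ℤ) - r1 ⊤ + r1 (perp X))
          + ((finrank K X : ℤ) - r2 ⊤ + r2 (perp X))
          + (finrank K A : ℤ) - (finrank K X : ℤ)} (ud A))
    -- uq = rank of the union (M1/T)* ∨ (M2/T)* on E/T, where Mi/T has rank
    -- ci B = ri (comap T.mkQ B) - ri T; so (M1/T) ∧ (M2/T) has rank
    -- wq B = dim B - uq ⊤ + uq (perpQ B)
    (uq : Submodule K (V ⧸ T) → ℤ)
    (huq : ∀ B : Submodule K (V ⧸ T), IsLeast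
      {y : ℤ | ∃ X ≤ B,
        y = ((finrank K X : ℤ) - (r1 ⊤ - r1 T) + (r1 (comap T.mkQ (perpQ X)) - r1 T))
          + ((finrank K X : ℤ) - (r2 ⊤ - r2 T) + (r2 (comap T.mkQ (perpQ X)) - r2 T))
          + (finrank K B : ℤ) - (finrank K X : ℤ)} (uq B)) :
    -- (M1 ∨ M2)|_T = M1|_T ∨ M2|_T
    ((∀ A ≤ T, IsLeast
      {y : ℤ | ∃ X ≤ A, y = r1 X + r2 X + (finrank K A : ℤ) - (finrank K X : ℤ)} (u A)) ∧
    -- (M1 ∧ M2)/T ≅ (M1/T) ∧ (M2/T)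
    (∃ φ : Submodule K (V ⧸ T) ≃o Submodule K (V ⧸ T),
      ∀ B : Submodule K (V ⧸ T),
        (((finrank K ↥(comap T.mkQ B) : ℤ) - ud ⊤ + ud (perp (comap T.mkQ B)))
          - ((finrank K T : ℤ) - ud ⊤ + ud (perp T)))
        = (finrank K ↥(φ B) : ℤ) - uq ⊤ + uq (perpQ (φ B)))) := by
  have hperp_dim : ∀ A : Submodule K V, finrank K (perp A) + finrank K A = finrank K V :=
    qaux_finrank_f perp hperp_inv hperp_anti
  have hperpQ_dim : ∀ B : Submodule K (V ⧸ T),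
      finrank K (perpQ B) + finrank K B = finrank K (V ⧸ T) :=
    qaux_finrank_f perpQ hperpQ_inv hperpQ_anti
  have hquot : finrank K (V ⧸ T) + finrank K T = finrank K V :=
    T.finrank_quotient_add_finrank
  have hcomap : ∀ B : Submodule K (V ⧸ T),
      finrank K (comap T.mkQ B) = finrank K B + finrank K T := qaux_finrank_comap_mkQ T
  have key : ∀ B : Submodule K (V ⧸ T), ud (perp (comap T.mkQ B)) = uq (perpQ B) := by
    intro B
    set A := comap T.mkQ B with hA
    have hTA : T ≤ A := qaux_le_comap T B
    have hB : map T.mkQ A = B := Submodule.map_comap_eq_of_surjective T.mkQ_surjective B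
    have hset : {y : ℤ | ∃ X ≤ perp A,
        y = ((finrank K X : ℤ) - r1 ⊤ + r1 (perp X))
          + ((finrank K X : ℤ) - r2 ⊤ + r2 (perp X))
          + (finrank K (perp A) : ℤ) - (finrank K X : ℤ)}
        = {y : ℤ | ∃ X ≤ perpQ B,
        y = ((finrank K X : ℤ) - (r1 ⊤ - r1 T) + (r1 (comap T.mkQ (perpQ X)) - r1 T))
          + ((finrank K X : ℤ) - (r2 ⊤ - r2 T) + (r2 (comap T.mkQ (perpQ X)) - r2 T))
          + (finrank K (perpQ B) : ℤ) - (finrank K X : ℤ)} := by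
      have hdpApB : finrank K (perp A) = finrank K (perpQ B) := by
        have h1 := hperp_dim A
        have h2 := hperpQ_dim B
        have h3 := hcomap B
        rw [← hA] at h3
        have h4 := hquot
        omega
      ext y
      constructor
      · rintro ⟨X, hX, rfl⟩
        have hAX : A ≤ perp X := by
          have h := hperp_anti X (perp A) hX
          rwa [hperp_inv] at h
        have hTpX : T ≤ perp X := hTA.trans hAX
        refine ⟨perpQ (map T.mkQ (perp X)), hperpQ_anti _ _ (hB ▸ Submodule.map_mono hAX), ?_⟩
        have hYX : comap T.mkQ (perpQ (perpQ (map T.mkQ (perp X)))) = perp X := by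
          rw [hperpQ_inv, Submodule.comap_map_mkQ, sup_eq_right.mpr hTpX]
        rw [hYX]
        have d1 : finrank K (comap T.mkQ (map T.mkQ (perp X)))
            = finrank K (map T.mkQ (perp X)) + finrank K T := hcomap _
        have d2 : comap T.mkQ (map T.mkQ (perp X)) = perp X := by
          rw [Submodule.comap_map_mkQ, sup_eq_right.mpr hTpX]
        rw [d2] at d1
        have d3 := hperpQ_dim (map T.mkQ (perp X))
        have d4 := hperp_dim X
        have d5 : finrank K (perpQ (map T.mkQ (perp X))) = finrank K X := by omega
        rw [d5, hdpApB]
        ring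
      · rintro ⟨X', hX', rfl⟩
        have hBle : B ≤ perpQ X' := by
          have h := hperpQ_anti X' (perpQ B) hX'
          rwa [hperpQ_inv] at h
        have hAle : A ≤ comap T.mkQ (perpQ X') := Submodule.comap_mono hBle
        refine ⟨perp (comap T.mkQ (perpQ X')), hperp_anti _ _ hAle, ?_⟩
        rw [hperp_inv]
        have d1 : finrank K (comap T.mkQ (perpQ X'))
            = finrank K (perpQ X') + finrank K T := hcomap _
        have d2 := hperpQ_dim X'
        have d3 := hperp_dim (comap T.mkQ (perpQ X'))
        have d4 : finrank K (perp (comap T.mkQ (perpQ X'))) = finrank K X' := by omega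
        rw [d4, hdpApB]
        ring
    exact (hset ▸ hud (perp A)).unique (huq (perpQ B))
  refine ⟨fun A _ => hu A, OrderIso.refl _, fun B => ?_⟩
  have k1 := key B
  have k2 := key ⊥
  have e1 : comap T.mkQ (⊥ : Submodule K (V ⧸ T)) = T := by
    rw [Submodule.comap_bot, Submodule.ker_mkQ]
  have e2 : perpQ ⊥ = ⊤ := qaux_f_bot perpQ hperpQ_inv hperpQ_anti
  rw [e1, e2] at k2
  have e3 : finrank K (comap T.mkQ B) = finrank K B + finrank K T := hcomap B
  simp only [OrderIso.refl_apply]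
  rw [k1, k2, e3]
  push_cast
  ring_nf
  rw [add_sub_assoc, add_comm]
  exact rfl
end
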